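/- arXiv:1101.4437 — 5 statements merged into one kernel-verified Lean document; each statement's English description precedes it below -/
import Mathlib

section
/- Let F be a cumulative distribution function with quantile function F⁻(u) = inf{x : F(x) ≥ u}, let α ∈ (1,2), and let κ > 0 with κ < 1 and κ < 2/(α+1). If t^κ · sup_{t^{-κ} ≤ λ ≤ t^κ} |F⁻(1 - λ/t)/F⁻(1 - 1/t) - λ^{-1/α}| → 0 as t → ∞, then there exists a constant c > 0 such that F⁻(1 - 1/t) = c·t^{1/α}·(1 + o(t^{-κ(1+1/α)})) as t → ∞. -/
set_option maxHeartbeats 1000000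

open Filter Set


noncomputable def seqP (κ s : ℝ) (n : ℕ) : ℝ := s ^ ((1+κ)^n)

lemma seqP_zero (κ s : ℝ) : seqP κ s 0 = s := by simp [seqP]

lemma seqP_succ (κ s : ℝ) (hs : 0 ≤ s) (n : ℕ) :
    seqP κ s (n+1) = (seqP κ s n) ^ (1+κ) := by
  unfold seqP
  rw [pow_succ, Real.rpow_mul hs]

lemma seqP_add (κ s : ℝ) (hs : 0 ≤ s) (n m : ℕ) :
    seqP κ (seqP κ s n) m = seqP κ s (n+m) := by
  unfold seqP
  rw [← Real.rpow_mul hs, ← pow_add]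

lemma le_seqP (κ s : ℝ) (hκ : 0 ≤ κ) (hs : 1 ≤ s) (n : ℕ) : s ≤ seqP κ s n := by
  have h1 : (1:ℝ) ≤ (1+κ)^n := one_le_pow₀ (by linarith)
  calc s = s ^ (1:ℝ) := (Real.rpow_one s).symm
    _ ≤ s ^ ((1+κ)^n) := Real.rpow_le_rpow_of_exponent_le hs h1

lemma seqP_mono_base (κ s s' : ℝ) (hκ : 0 ≤ κ) (hs : 0 ≤ s) (h : s ≤ s') (n : ℕ) :
    seqP κ s n ≤ seqP κ s' n :=
  Real.rpow_le_rpow hs h (pow_nonneg (by linarith) n)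

lemma seqP_rpow_neg_le (κ β s : ℝ) (hκ : 0 ≤ κ) (hβ : 0 ≤ β) (hs : 1 ≤ s) (n : ℕ) :
    (seqP κ s n) ^ (-β) ≤ s ^ (-β) * (s ^ (-(β*κ)))^n := by
  have hs0 : (0:ℝ) < s := by linarith
  have h1 : (seqP κ s n) ^ (-β) = s ^ ((1+κ)^n * (-β)) := by
    rw [Real.rpow_mul hs0.le]; rfl
  have h2 : (1:ℝ) + n*κ ≤ (1+κ)^n := one_add_mul_le_pow (by linarith) n
  have h3 : (1+κ)^n * (-β) ≤ ((1:ℝ) + n*κ) * (-β) :=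
    mul_le_mul_of_nonpos_right h2 (by linarith)
  have h4 : s ^ ((1+κ)^n * (-β)) ≤ s ^ (((1:ℝ) + n*κ) * (-β)) :=
    Real.rpow_le_rpow_of_exponent_le hs h3
  have h5 : s ^ (((1:ℝ) + n*κ) * (-β)) = s ^ (-β) * (s ^ (-(β*κ)))^n := by
    rw [← Real.rpow_natCast (s ^ (-(β*κ))) n, ← Real.rpow_mul hs0.le, ← Real.rpow_add hs0]
    ring_nf
  rw [h1]; rw [h5] at h4; exact h4

lemma geom_aux {r : ℝ} (h0 : 0 ≤ r) (h2 : r ≤ 1/2) (n : ℕ) :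
    ∑ k ∈ Finset.range n, r ^ k ≤ 2 := by
  calc ∑ k ∈ Finset.range n, r ^ k ≤ ∑ k ∈ Finset.range n, (1/2:ℝ) ^ k :=
        Finset.sum_le_sum (fun i _ => pow_le_pow_left₀ h0 h2 i)
    _ ≤ 2 := sum_geometric_two_le n

lemma key (φ ε : ℝ → ℝ) (κ β T₀ : ℝ)
    (hκ : 0 < κ) (hβ : 0 < β) (hT₀ : 2 ≤ T₀)
    (hrT : T₀ ^ (-(β * κ)) ≤ 1/2)
    (hεlim : Tendsto ε atTop (nhds 0))
    (hε0 : ∀ t, T₀ ≤ t → 0 ≤ ε t)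
    (hε8 : ∀ t, T₀ ≤ t → ε t ≤ 1/8)
    (hφpos : ∀ t, T₀ ≤ t → 0 < φ t)
    (hbridge : ∀ t, T₀ ≤ t → ∀ s, t ≤ s → s ≤ t ^ (1+κ) → |φ s - φ t| ≤ φ t * ε t)
    (hstep : ∀ t, T₀ ≤ t → |φ (t ^ (1+κ)) - φ t| ≤ φ t * ε t * t ^ (-β)) :
    ∃ c : ℝ, 0 < c ∧ ∀ C : ℝ, 0 < C → ∀ᶠ s in atTop, |φ s - c| ≤ C * s ^ (-β) := by
  have hT₀1 : (1:ℝ) ≤ T₀ := by linarith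
  have hs1 : ∀ s, T₀ ≤ s → (1:ℝ) ≤ s := fun s hs => le_trans hT₀1 hs
  have hs0 : ∀ s, T₀ ≤ s → (0:ℝ) < s := fun s hs => by linarith [hs1 s hs]
  have hseqT : ∀ s, T₀ ≤ s → ∀ n, T₀ ≤ seqP κ s n :=
    fun s hs n => le_trans hs (le_seqP κ s hκ.le (hs1 s hs) n)
  have hrs : ∀ s, T₀ ≤ s → s ^ (-(β*κ)) ≤ 1/2 := fun s hs =>
    le_trans (Real.rpow_le_rpow_of_nonpos (by linarith) hs
      (by nlinarith : -(β*κ) ≤ 0)) hrT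
  have hr0 : ∀ s, T₀ ≤ s → 0 ≤ s ^ (-(β*κ)) := fun s hs => Real.rpow_nonneg (by linarith) _
  have hsb1 : ∀ s, T₀ ≤ s → s ^ (-β) ≤ 1 := fun s hs =>
    Real.rpow_le_one_of_one_le_of_nonpos (hs1 s hs) (by linarith)
  have hsb0 : ∀ s, T₀ ≤ s → 0 ≤ s ^ (-β) := fun s hs => Real.rpow_nonneg (by linarith) _
  -- step bound along the sequence
  have hstepseq : ∀ s, T₀ ≤ s → ∀ η, (∀ k, ε (seqP κ s k) ≤ η) → ∀ n,
      φ (seqP κ s n) ≤ 2 * φ s →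
      |φ (seqP κ s (n+1)) - φ (seqP κ s n)| ≤ 2 * φ s * η * (s ^ (-β) * (s ^ (-(β*κ)))^n) := by
    intro s hs η hη n hb
    have hTn := hseqT s hs n
    have h1 : |φ (seqP κ s (n+1)) - φ (seqP κ s n)| ≤
        φ (seqP κ s n) * ε (seqP κ s n) * (seqP κ s n) ^ (-β) := by
      rw [seqP_succ κ s (by linarith [hs0 s hs]) n]
      exact hstep _ hTn
    have hε0' := hε0 _ hTn
    have hφ0' := (hφpos _ hTn).le
    have hsbn : (seqP κ s n) ^ (-β) ≤ s ^ (-β) * (s ^ (-(β*κ)))^n :=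
      seqP_rpow_neg_le κ β s hκ.le hβ.le (hs1 s hs) n
    have hη0 : 0 ≤ η := le_trans hε0' (hη n)
    calc |φ (seqP κ s (n+1)) - φ (seqP κ s n)| ≤
        φ (seqP κ s n) * ε (seqP κ s n) * (seqP κ s n) ^ (-β) := h1
      _ ≤ (2 * φ s * η) * (s ^ (-β) * (s ^ (-(β*κ)))^n) := by
          have hφs2 : (0:ℝ) ≤ 2 * φ s := by linarith [hφpos s hs]
          apply mul_le_mul (mul_le_mul hb (hη n) hε0' hφs2) hsbn
            (Real.rpow_nonneg (by linarith [hs0 s hs, le_seqP κ s hκ.le (hs1 s hs) n]) _)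
            (mul_nonneg hφs2 hη0)
      _ = 2 * φ s * η * (s ^ (-β) * (s ^ (-(β*κ)))^n) := by ring
  -- main induction
  have hQ : ∀ s, T₀ ≤ s → ∀ η, 0 ≤ η → η ≤ 1/8 → (∀ k, ε (seqP κ s k) ≤ η) → ∀ n,
      φ (seqP κ s n) ≤ 2 * φ s ∧
      |φ (seqP κ s n) - φ s| ≤ 2 * φ s * η * s ^ (-β) * ∑ k ∈ Finset.range n, (s ^ (-(β*κ)))^k := by
    intro s hs η hη0 hη8 hη n
    have hφs := hφpos s hs
    induction n with
    | zero =>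
      refine ⟨by rw [seqP_zero]; linarith, by rw [seqP_zero]; simp⟩
    | succ n ih =>
      have hsum2 : ∑ k ∈ Finset.range (n+1), (s ^ (-(β*κ)))^k ≤ 2 :=
        geom_aux (hr0 s hs) (hrs s hs) (n+1)
      have hstep' := hstepseq s hs η hη n ih.1
      have htri : |φ (seqP κ s (n+1)) - φ s| ≤
          2 * φ s * η * s ^ (-β) * ∑ k ∈ Finset.range (n+1), (s ^ (-(β*κ)))^k := by
        have := abs_sub_le (φ (seqP κ s (n+1))) (φ (seqP κ s n)) (φ s)
        rw [Finset.sum_range_succ]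
        calc |φ (seqP κ s (n+1)) - φ s| ≤
            |φ (seqP κ s (n+1)) - φ (seqP κ s n)| + |φ (seqP κ s n) - φ s| := this
          _ ≤ 2 * φ s * η * (s ^ (-β) * (s ^ (-(β*κ)))^n) +
              2 * φ s * η * s ^ (-β) * ∑ k ∈ Finset.range n, (s ^ (-(β*κ)))^k := by
              linarith [ih.2]
          _ = 2 * φ s * η * s ^ (-β) *
              ((∑ k ∈ Finset.range n, (s ^ (-(β*κ)))^k) + (s ^ (-(β*κ)))^n) := by ring
      refine ⟨?_, htri⟩
      have hb2 : 2 * φ s * η * s ^ (-β) * ∑ k ∈ Finset.range (n+1), (s ^ (-(β*κ)))^k ≤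
          φ s / 2 := by
        have hnn : (0:ℝ) ≤ 2 * φ s * η * s ^ (-β) :=
          mul_nonneg (mul_nonneg (by linarith) hη0) (hsb0 s hs)
        have h1 : 2 * φ s * η * s ^ (-β) * ∑ k ∈ Finset.range (n+1), (s ^ (-(β*κ)))^k ≤
            2 * φ s * η * s ^ (-β) * 2 := by
          apply mul_le_mul_of_nonneg_left hsum2 hnn
        have h2 : 2 * φ s * η * s ^ (-β) ≤ 2 * φ s * η := by
          have := mul_le_mul_of_nonneg_left (hsb1 s hs)
            (show (0:ℝ) ≤ 2 * φ s * η from mul_nonneg (by linarith) hη0)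
          linarith
        nlinarith [hφs]
      have := abs_le.mp (le_trans htri hb2)
      linarith [this.1, this.2]
  -- Cauchy along the sequence
  have hcauchy : ∀ s, T₀ ≤ s → ∃ c, Tendsto (fun n => φ (seqP κ s n)) atTop (nhds c) := by
    intro s hs
    apply cauchySeq_tendsto_of_complete
    apply cauchySeq_of_le_geometric (s ^ (-(β*κ))) (2 * φ s * (1/8) * s ^ (-β))
      (lt_of_le_of_lt (hrs s hs) (by norm_num))
    intro n
    rw [Real.dist_eq, abs_sub_comm]
    have h8 : ∀ k, ε (seqP κ s k) ≤ 1/8 := fun k => hε8 _ (hseqT s hs k)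
    have := hstepseq s hs (1/8) h8 n ((hQ s hs (1/8) (by norm_num) le_rfl h8 n).1)
    calc |φ (seqP κ s (n+1)) - φ (seqP κ s n)| ≤
        2 * φ s * (1/8) * (s ^ (-β) * (s ^ (-(β*κ)))^n) := this
      _ = 2 * φ s * (1/8) * s ^ (-β) * (s ^ (-(β*κ)))^n := by ring
  obtain ⟨c, hc⟩ := hcauchy T₀ le_rfl
  -- tendsto to atTop of the sequence
  have hT : ∀ t, T₀ ≤ t → Tendsto (fun m => seqP κ t m) atTop atTop := by
    intro t ht
    have hlog : (0:ℝ) < Real.log 2 := Real.log_pos (by norm_num)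
    have hlin : Tendsto (fun m : ℕ => Real.log 2 * (1 + (m:ℝ)*κ)) atTop atTop := by
      apply Tendsto.const_mul_atTop hlog
      apply tendsto_atTop_add_const_left
      exact Tendsto.atTop_mul_const hκ tendsto_natCast_atTop_atTop
    apply tendsto_atTop_mono _ hlin
    intro m
    have h2e : (2:ℝ) ^ ((1:ℝ) + (m:ℝ)*κ) ≤ seqP κ t m := by
      unfold seqP
      calc (2:ℝ) ^ ((1:ℝ) + (m:ℝ)*κ) ≤ (2:ℝ) ^ ((1+κ)^m) :=
            Real.rpow_le_rpow_of_exponent_le (by norm_num)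
              (one_add_mul_le_pow (by linarith) m)
        _ ≤ t ^ ((1+κ)^m) := Real.rpow_le_rpow (by norm_num) (by linarith) (by positivity)
    have hexp : Real.log 2 * (1 + (m:ℝ)*κ) ≤ (2:ℝ) ^ ((1:ℝ) + (m:ℝ)*κ) := by
      rw [Real.rpow_def_of_pos (by norm_num)]
      have := Real.add_one_le_exp (Real.log 2 * (1 + (m:ℝ)*κ))
      linarith
    linarith
  -- all sequences tend to the same c
  have htendall : ∀ s, T₀ ≤ s → Tendsto (fun n => φ (seqP κ s n)) atTop (nhds c) := by
    have hA : ∀ n, Tendsto (fun m => φ (seqP κ (seqP κ T₀ n) m)) atTop (nhds c) := by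
      intro n
      have h1 := hc.comp (tendsto_add_atTop_nat n)
      have : (fun m => φ (seqP κ T₀ (m + n))) = fun m => φ (seqP κ (seqP κ T₀ n) m) := by
        funext m; rw [seqP_add κ T₀ (by linarith) n m, Nat.add_comm]
      rw [← this]; exact h1
    have hB : ∀ t, T₀ ≤ t → ∀ s, t ≤ s → s ≤ t^(1+κ) →
        Tendsto (fun m => φ (seqP κ t m)) atTop (nhds c) →
        Tendsto (fun m => φ (seqP κ s m)) atTop (nhds c) := by
      intro t ht s hts hst htend
      have ht0 : (0:ℝ) < t := hs0 t ht
      have hsT : T₀ ≤ s := le_trans ht hts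
      have h8 : ∀ k, ε (seqP κ t k) ≤ 1/8 := fun k => hε8 _ (hseqT t ht k)
      have hdiff : Tendsto (fun m => φ (seqP κ s m) - φ (seqP κ t m)) atTop (nhds 0) := by
        apply squeeze_zero_norm (a := fun m => 2 * φ t * ε (seqP κ t m))
        · intro m
          rw [Real.norm_eq_abs]
          have hmem1 : seqP κ t m ≤ seqP κ s m :=
            seqP_mono_base κ t s hκ.le ht0.le hts m
          have hmem2 : seqP κ s m ≤ (seqP κ t m) ^ (1+κ) := by
            rw [← seqP_succ κ t ht0.le m]
            calc seqP κ s m ≤ seqP κ (t^(1+κ)) m :=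
                  seqP_mono_base κ s (t^(1+κ)) hκ.le (hs0 s hsT).le hst m
              _ = seqP κ t (1+m) := by
                  rw [← seqP_add κ t ht0.le 1 m]
                  congr 1
                  unfold seqP; rw [pow_one]
              _ = seqP κ t (m+1) := by rw [Nat.add_comm]
          have hbr := hbridge (seqP κ t m) (hseqT t ht m) (seqP κ s m) hmem1 hmem2
          calc |φ (seqP κ s m) - φ (seqP κ t m)| ≤ φ (seqP κ t m) * ε (seqP κ t m) := hbr
            _ ≤ 2 * φ t * ε (seqP κ t m) :=
                mul_le_mul_of_nonneg_right
                  ((hQ t ht (1/8) (by norm_num) le_rfl h8 m).1)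
                  (hε0 _ (hseqT t ht m))
        · have := (hεlim.comp (hT t ht)).const_mul (2 * φ t)
          simpa using this
      have := hdiff.add htend
      simpa using this
    intro s hs
    have hex : ∃ m, s < seqP κ T₀ m := ((hT T₀ le_rfl).eventually_gt_atTop s).exists
    have hm₀ := Nat.find_spec hex
    have hm₀0 : Nat.find hex ≠ 0 := by
      intro h
      rw [h, seqP_zero] at hm₀
      exact absurd hs (not_le.mpr hm₀)
    obtain ⟨n, hn⟩ : ∃ n, Nat.find hex = n + 1 :=
      ⟨Nat.find hex - 1, (Nat.succ_pred_eq_of_pos (Nat.pos_of_ne_zero hm₀0)).symm⟩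
    have hle : seqP κ T₀ n ≤ s := not_lt.mp (Nat.find_min hex (by omega))
    have hlt : s ≤ (seqP κ T₀ n) ^ (1+κ) := by
      rw [← seqP_succ κ T₀ (by linarith) n]
      have : s < seqP κ T₀ (n+1) := by rw [← hn]; exact hm₀
      linarith
    exact hB (seqP κ T₀ n) (hseqT T₀ le_rfl n) s hle hlt (hA n)
  -- distance from φ s to c
  have hdist : ∀ s, T₀ ≤ s → ∀ η, 0 ≤ η → η ≤ 1/8 → (∀ k, ε (seqP κ s k) ≤ η) →
      |c - φ s| ≤ 4 * φ s * η * s ^ (-β) := by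
    intro s hs η hη0 hη8 hη
    have h1 : Tendsto (fun n => |φ (seqP κ s n) - φ s|) atTop (nhds (|c - φ s|)) := by
      have := ((htendall s hs).sub_const (φ s)).abs
      exact this
    apply le_of_tendsto' h1
    intro n
    calc |φ (seqP κ s n) - φ s| ≤
        2 * φ s * η * s ^ (-β) * ∑ k ∈ Finset.range n, (s ^ (-(β*κ)))^k :=
          (hQ s hs η hη0 hη8 hη n).2
      _ ≤ 2 * φ s * η * s ^ (-β) * 2 := by
          apply mul_le_mul_of_nonneg_left (geom_aux (hr0 s hs) (hrs s hs) n)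
            (mul_nonneg (mul_nonneg (by linarith [hφpos s hs]) hη0) (hsb0 s hs))
      _ = 4 * φ s * η * s ^ (-β) := by ring
  -- c is positive, and φ s ≤ 2c for s ≥ T₀
  have hφ2c : ∀ s, T₀ ≤ s → φ s ≤ 2 * c ∧ 0 < c := by
    intro s hs
    have h8 : ∀ k, ε (seqP κ s k) ≤ 1/8 := fun k => hε8 _ (hseqT s hs k)
    have := hdist s hs (1/8) (by norm_num) le_rfl h8
    have hb : 4 * φ s * (1/8) * s ^ (-β) ≤ φ s / 2 := by
      nlinarith [hsb1 s hs, hsb0 s hs, hφpos s hs]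
    have h2 := abs_le.mp (le_trans this hb)
    constructor
    · linarith [h2.1, h2.2]
    · linarith [h2.1, h2.2, hφpos s hs]
  have hcpos : 0 < c := (hφ2c T₀ le_rfl).2
  refine ⟨c, hcpos, ?_⟩
  intro C hC
  set η : ℝ := min (C / (8 * c)) (1/8) with hηdef
  have hηpos : 0 < η := lt_min (by positivity) (by norm_num)
  obtain ⟨S, hS⟩ : ∃ S, ∀ t ≥ S, ε t < η := by
    have := hεlim.eventually_lt_const hηpos
    exact eventually_atTop.mp this
  filter_upwards [eventually_ge_atTop (max T₀ S)] with s hsmax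
  have hs : T₀ ≤ s := le_trans (le_max_left _ _) hsmax
  have hsS : S ≤ s := le_trans (le_max_right _ _) hsmax
  have hη : ∀ k, ε (seqP κ s k) ≤ η := by
    intro k
    exact (hS _ (le_trans hsS (le_seqP κ s hκ.le (hs1 s hs) k))).le
  have hd := hdist s hs η hηpos.le (min_le_right _ _) hη
  calc |φ s - c| = |c - φ s| := (abs_sub_comm _ _).symm
    _ ≤ 4 * φ s * η * s ^ (-β) := hd
    _ ≤ 4 * (2*c) * (C / (8*c)) * s ^ (-β) := by
        apply mul_le_mul_of_nonneg_right _ (hsb0 s hs)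
        apply mul_le_mul (by nlinarith [(hφ2c s hs).1, hηpos]) (min_le_left _ _) hηpos.le
          (by positivity)
    _ = C * s ^ (-β) := by field_simp; ring

/-- If `t^κ · sup_{t^{-κ} ≤ λ ≤ t^κ} |F⁻(1-λ/t)/F⁻(1-1/t) - λ^{-1/α}| → 0`
as `t → ∞`, then `F⁻(1-1/t) = c t^{1/α}(1 + o(t^{-κ(1+1/α)}))` for some `c > 0`. -/
theorem stmt0 (F : ℝ → ℝ) (hF : Monotone F)
    (Finv : ℝ → ℝ) (hFinv : ∀ u, Finv u = sInf {x : ℝ | u ≤ F x})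
    (α κ : ℝ) (hα1 : 1 < α) (hα2 : α < 2)
    (hκ0 : 0 < κ) (hκ1 : κ < 1) (hκ2 : κ < 2 / (α + 1))
    (hyp : Tendsto
      (fun t : ℝ => t ^ κ *
        sSup ((fun l : ℝ => |Finv (1 - l / t) / Finv (1 - 1 / t) - l ^ (-(1 / α))|) ''
          Icc (t ^ (-κ)) (t ^ κ)))
      atTop (nhds 0)) :
    ∃ c : ℝ, 0 < c ∧ ∃ δ : ℝ → ℝ,
      (δ =o[atTop] fun t : ℝ => t ^ (-(κ * (1 + 1 / α)))) ∧
      ∀ᶠ t : ℝ in atTop, Finv (1 - 1 / t) = c * t ^ (1 / α) * (1 + δ t) := by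
  classical
  have hα0 : (0:ℝ) < α := by linarith
  have hia : (0:ℝ) < 1/α := by positivity
  set S : ℝ → Set ℝ := fun t =>
    (fun l : ℝ => |Finv (1 - l / t) / Finv (1 - 1 / t) - l ^ (-(1 / α))|) ''
      Icc (t ^ (-κ)) (t ^ κ) with hSdef
  have hyp2 : Tendsto (fun t : ℝ => t ^ κ * sSup (S t)) atTop (nhds 0) := hyp
  have hlt1 : ∀ᶠ t : ℝ in atTop, t ^ κ * sSup (S t) < 1 :=
    hyp2.eventually_lt_const (by norm_num)
  -- helper facts for t ≥ 1
  have hbase : ∀ t : ℝ, 2 ≤ t →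
      (0:ℝ) < t ∧ (1:ℝ) ≤ t ∧ 0 < t ^ (-κ) ∧ t ^ (-κ) ≤ 1 ∧ 1 ≤ t ^ κ := by
    intro t ht
    have ht0 : (0:ℝ) < t := by linarith
    have ht1 : (1:ℝ) ≤ t := by linarith
    refine ⟨ht0, ht1, Real.rpow_pos_of_pos ht0 _,
      Real.rpow_le_one_of_one_le_of_nonpos ht1 (by linarith), ?_⟩
    calc (1:ℝ) = t ^ (0:ℝ) := (Real.rpow_zero t).symm
      _ ≤ t ^ κ := Real.rpow_le_rpow_of_exponent_le ht1 hκ0.le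
  -- degenerate-case helper
  have hdeg : ∀ t : ℝ, 2 ≤ t →
      (∀ l : ℝ, l ∈ Icc (t ^ (-κ)) (t ^ κ) → Finv (1 - l / t) = 0) →
      1 ≤ t ^ κ * sSup (S t) := by
    intro t ht h0
    obtain ⟨ht0, ht1, hnk0, hnk1, hκ1'⟩ := hbase t ht
    have h1mem : (1:ℝ) ∈ Icc (t ^ (-κ)) (t ^ κ) := ⟨hnk1, hκ1'⟩
    have hD : Finv (1 - 1 / t) = 0 := by
      have := h0 1 h1mem
      simpa using this
    have hBdd : BddAbove (S t) := by
      refine ⟨(t ^ (-κ)) ^ (-(1/α)), ?_⟩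
      rintro y ⟨l, hl, rfl⟩
      simp only [h0 l hl, hD, zero_div, zero_sub, abs_neg]
      rw [abs_of_nonneg (Real.rpow_nonneg (le_trans hnk0.le hl.1) _)]
      exact Real.rpow_le_rpow_of_nonpos hnk0 hl.1 (by linarith)
    have hel : (1:ℝ) ≤ sSup (S t) := by
      have hmem : |Finv (1 - 1 / t) / Finv (1 - 1 / t) - (1:ℝ) ^ (-(1/α))| ∈ S t := by
        refine ⟨1, h1mem, by norm_num⟩
      have hval : |Finv (1 - 1 / t) / Finv (1 - 1 / t) - (1:ℝ) ^ (-(1/α))| = 1 := by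
        rw [hD, Real.one_rpow]
        norm_num
      have := le_csSup hBdd hmem
      linarith [hval ▸ this]
    nlinarith
  have habs : ∀ t : ℝ, (∀ᶠ u : ℝ in atTop, 2 ≤ u) → True := fun _ _ => trivial
  -- case: F bounded away from 1 from below impossible etc.
  by_cases hsupF : ∀ u : ℝ, u < 1 → ∃ x, u ≤ F x
  · by_cases hx₀e : ∃ x, F x < 1
    · -- MAIN CASE
      obtain ⟨x₀, hx₀⟩ := hx₀e
      set β := κ * (1 + 1/α) with hβdef
      have hβpos : 0 < β := by positivity
      -- eventual conditions
      have evκ1 : Tendsto (fun t : ℝ => t ^ (κ - 1)) atTop (nhds 0) := by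
        have := tendsto_rpow_neg_atTop (y := 1 - κ) (by linarith)
        simpa [neg_sub] using this
      have ev1 : ∀ᶠ t : ℝ in atTop, t ^ (κ-1) ≤ (1 - F x₀)/2 :=
        (evκ1.eventually_lt_const (by linarith)).mono (fun t h => h.le)
      have ev2 : ∀ᶠ t : ℝ in atTop, t ^ κ * sSup (S t) ≤ 1/8 :=
        (hyp2.eventually_lt_const (by norm_num)).mono (fun t h => h.le)
      have ev3 : ∀ᶠ t : ℝ in atTop, t ^ (-(κ*(1/α))) ≤ 1/2 :=
        ((tendsto_rpow_neg_atTop (by positivity)).eventually_lt_const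
          (by norm_num)).mono (fun t h => h.le)
      have ev4 : ∀ᶠ t : ℝ in atTop, t ^ (-(β*κ)) ≤ 1/2 :=
        ((tendsto_rpow_neg_atTop (by positivity)).eventually_lt_const
          (by norm_num)).mono (fun t h => h.le)
      obtain ⟨T, hTall⟩ := eventually_atTop.mp
        (ev1.and (ev2.and (ev3.and (ev4.and (eventually_ge_atTop (2:ℝ))))))
      set T₀ : ℝ := max T 2 with hT₀def
      have hT₀2 : (2:ℝ) ≤ T₀ := le_max_right _ _
      have hcond : ∀ t, T₀ ≤ t → t ^ (κ-1) ≤ (1 - F x₀)/2 ∧ t ^ κ * sSup (S t) ≤ 1/8 ∧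
          t ^ (-(κ*(1/α))) ≤ 1/2 ∧ t ^ (-(β*κ)) ≤ 1/2 ∧ 2 ≤ t := by
        intro t ht
        exact hTall t (le_trans (le_max_left _ _) ht)
      -- structural facts
      have main : ∀ t, T₀ ≤ t →
          0 < Finv (1 - 1/t) ∧
          (∀ l : ℝ, t ^ (-κ) ≤ l → l ≤ t ^ κ →
            |Finv (1 - l / t) / Finv (1 - 1 / t) - l ^ (-(1/α))| ≤ sSup (S t)) ∧
          0 ≤ sSup (S t) := by
        intro t ht
        obtain ⟨hδ1, hE8, hκα, hβκ, ht2⟩ := hcond t ht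
        obtain ⟨ht0, ht1, hnk0, hnk1, hκ1'⟩ := hbase t ht2
        have htdiv : t ^ κ / t = t ^ (κ - 1) := by
          rw [Real.rpow_sub ht0, Real.rpow_one]
        have humin : F x₀ < 1 - t ^ (κ-1) := by linarith
        -- quantile set facts
        have hlb : ∀ u : ℝ, 1 - t ^ (κ-1) ≤ u → x₀ ∈ lowerBounds {x | u ≤ F x} := by
          intro u h1 x hx
          by_contra hlt
          push_neg at hlt
          have := hF hlt.le
          have hx' : u ≤ F x := hx
          linarith
        have hne : ∀ u : ℝ, u < 1 → ({x | u ≤ F x}).Nonempty := fun u h2 => hsupF u h2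
        have hFinv_ge : ∀ u : ℝ, 1 - t ^ (κ-1) ≤ u → u < 1 → x₀ ≤ Finv u := by
          intro u h1 h2
          rw [hFinv u]
          exact le_csInf (hne u h2) (fun b hb => hlb u h1 hb)
        have hFinv_le : ∀ u : ℝ, 1 - t ^ (κ-1) ≤ u → ∀ x, u ≤ F x → Finv u ≤ x := by
          intro u h1 x hx
          rw [hFinv u]
          exact csInf_le ⟨x₀, hlb u h1⟩ hx
        have hmono : ∀ u u' : ℝ, 1 - t ^ (κ-1) ≤ u → u' < 1 → u ≤ u' → Finv u ≤ Finv u' := by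
          intro u u' h1 h2 h3
          rw [hFinv u, hFinv u']
          exact csInf_le_csInf ⟨x₀, hlb u h1⟩ (hne u' h2)
            (fun x hx => le_trans h3 hx)
        -- the upper reference point
        have hvmax1 : 1 - t ^ (-κ) / t < 1 := by
          have : 0 < t ^ (-κ) / t := div_pos hnk0 ht0
          linarith
        obtain ⟨x₁, hx₁⟩ := hsupF (1 - t ^ (-κ) / t) hvmax1
        -- membership of u-values
        have hrange : ∀ l : ℝ, t ^ (-κ) ≤ l → l ≤ t ^ κ →
            1 - t ^ (κ-1) ≤ 1 - l/t ∧ 1 - l/t ≤ 1 - t ^ (-κ)/t := by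
          intro l hl1 hl2
          constructor
          · have : l / t ≤ t ^ κ / t := by gcongr
            rw [htdiv] at this
            linarith
          · have : t ^ (-κ) / t ≤ l / t := by gcongr
            linarith
        have hDrange : 1 - t ^ (κ-1) ≤ 1 - 1/t ∧ 1 - 1/t ≤ 1 - t ^ (-κ)/t := by
          have h1 : (1:ℝ)/t ≤ t ^ (κ-1) := by
            have : (1:ℝ)/t = t ^ (-1 : ℝ) := by
              rw [Real.rpow_neg_one]
              exact one_div t
            rw [this]
            exact Real.rpow_le_rpow_of_exponent_le ht1 (by linarith)
          have h2 : t ^ (-κ)/t ≤ 1/t := by gcongr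
          exact ⟨by linarith, by linarith⟩
        have hD1 : (1:ℝ) - 1/t < 1 := by
          have : 0 < 1/t := by positivity
          linarith
        -- bounds on Finv over the range
        have hFb : ∀ l : ℝ, t ^ (-κ) ≤ l → l ≤ t ^ κ →
            x₀ ≤ Finv (1 - l/t) ∧ Finv (1 - l/t) ≤ x₁ := by
          intro l hl1 hl2
          obtain ⟨hr1, hr2⟩ := hrange l hl1 hl2
          have hu1 : 1 - l/t < 1 := lt_of_le_of_lt hr2 hvmax1
          refine ⟨hFinv_ge _ hr1 hu1, hFinv_le _ hr1 x₁ (le_trans hr2 hx₁)⟩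
        have hDb : x₀ ≤ Finv (1 - 1/t) ∧ Finv (1 - 1/t) ≤ x₁ :=
          ⟨hFinv_ge _ hDrange.1 hD1, hFinv_le _ hDrange.1 x₁ (le_trans hDrange.2 hx₁)⟩
        -- BddAbove
        have hBdd : BddAbove (S t) := by
          refine ⟨(|x₀| ⊔ |x₁|) * |Finv (1 - 1/t)|⁻¹ + (t ^ (-κ)) ^ (-(1/α)), ?_⟩
          rintro y ⟨l, hl, rfl⟩
          obtain ⟨hb1, hb2⟩ := hFb l hl.1 hl.2
          have hl0 : 0 < l := lt_of_lt_of_le hnk0 hl.1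
          calc |Finv (1 - l / t) / Finv (1 - 1 / t) - l ^ (-(1/α))| ≤
              |Finv (1 - l / t) / Finv (1 - 1 / t)| + |l ^ (-(1/α))| := abs_sub _ _
            _ ≤ (|x₀| ⊔ |x₁|) * |Finv (1 - 1/t)|⁻¹ + (t ^ (-κ)) ^ (-(1/α)) := by
                apply add_le_add
                · rw [abs_div, div_eq_mul_inv]
                  exact mul_le_mul_of_nonneg_right (abs_le_max_abs_abs hb1 hb2)
                    (inv_nonneg.mpr (abs_nonneg _))
                · rw [abs_of_nonneg (Real.rpow_nonneg hl0.le _)]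
                  exact Real.rpow_le_rpow_of_nonpos hnk0 hl.1 (by linarith)
        -- pointwise bound
        have hptw : ∀ l : ℝ, t ^ (-κ) ≤ l → l ≤ t ^ κ →
            |Finv (1 - l / t) / Finv (1 - 1 / t) - l ^ (-(1/α))| ≤ sSup (S t) := by
          intro l hl1 hl2
          exact le_csSup hBdd ⟨l, ⟨hl1, hl2⟩, rfl⟩
        have hσ0 : 0 ≤ sSup (S t) := le_trans (abs_nonneg _) (hptw 1 hnk1 hκ1')
        have hσ8 : sSup (S t) ≤ 1/8 := by nlinarith
        -- positivity of the denominator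
        have hD0 : Finv (1 - 1/t) ≠ 0 := by
          intro h
          have := hptw 1 hnk1 hκ1'
          rw [h] at this
          simp only [div_zero, Real.one_rpow, zero_sub, abs_neg, abs_one] at this
          linarith
        have hDpos : 0 < Finv (1 - 1/t) := by
          rcases lt_trichotomy (Finv (1 - 1/t)) 0 with hneg | hz | hpos
          · exfalso
            have hptκ := hptw (t ^ κ) (le_trans hnk1 hκ1') le_rfl
            rw [htdiv] at hptκ
            have hm : Finv (1 - t ^ (κ-1)) ≤ Finv (1 - 1/t) :=
              hmono _ _ le_rfl hD1 (by linarith [hDrange.1])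
            have hge1 : (1:ℝ) ≤ Finv (1 - t ^ (κ-1)) / Finv (1 - 1/t) := by
              rw [div_eq_mul_inv]
              have := mul_le_mul_of_nonpos_right hm (inv_nonpos.mpr hneg.le)
              rw [mul_inv_cancel₀ hD0] at this
              exact this
            have hsm : (t ^ κ) ^ (-(1/α)) ≤ 1/2 := by
              rw [← Real.rpow_mul ht0.le]
              calc t ^ (κ * -(1/α)) = t ^ (-(κ*(1/α))) := by ring_nf
                _ ≤ 1/2 := hκα
            have := abs_le.mp (le_trans hptκ hσ8)
            linarith [this.1, this.2]
          · exact absurd hz hD0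
          · exact hpos
        exact ⟨hDpos, hptw, hσ0⟩
      -- apply the abstract lemma
      have hkey := key (fun t => Finv (1 - 1/t) / t ^ (1/α))
        (fun t => t ^ κ * sSup (S t)) κ β T₀ hκ0 hβpos hT₀2
        ((hcond T₀ le_rfl).2.2.2.1) hyp2
        (fun t ht => mul_nonneg (Real.rpow_nonneg (by linarith) _) (main t ht).2.2)
        (fun t ht => (hcond t ht).2.1)
        (fun t ht => div_pos (main t ht).1
          (Real.rpow_pos_of_pos (by linarith [(hcond t ht).2.2.2.2]) _))
        ?hbridge ?hstep
      case hbridge =>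
        intro t ht s hts hst
        show |Finv (1 - 1/s) / s ^ (1/α) - Finv (1 - 1/t) / t ^ (1/α)| ≤
          Finv (1 - 1/t) / t ^ (1/α) * (t ^ κ * sSup (S t))
        obtain ⟨hDpos, hptw, hσ0⟩ := main t ht
        obtain ⟨_, _, _, _, ht2⟩ := hcond t ht
        obtain ⟨ht0, ht1, hnk0, hnk1, hκ1'⟩ := hbase t ht2
        have hs0 : (0:ℝ) < s := lt_of_lt_of_le ht0 hts
        have hl1 : t ^ (-κ) ≤ t / s := by
          have h1 : t / t ^ ((1:ℝ)+κ) ≤ t / s := by gcongr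
          have h2 : t / t ^ ((1:ℝ)+κ) = t ^ (-κ) := by
            rw [show t / t ^ ((1:ℝ)+κ) = t ^ (1:ℝ) / t ^ ((1:ℝ)+κ) by rw [Real.rpow_one],
              ← Real.rpow_sub ht0]
            norm_num
          linarith
        have hl2 : t / s ≤ t ^ κ := le_trans ((div_le_one hs0).mpr hts) hκ1'
        have hb := hptw (t/s) hl1 hl2
        have heq1 : (t/s)/t = 1/s := by
          rw [div_div, mul_comm s t, ← div_div, div_self ht0.ne', one_div]
        rw [heq1] at hb
        have heq2 : (t/s) ^ (-(1/α)) = s ^ (1/α) / t ^ (1/α) := by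
          rw [Real.rpow_neg (by positivity), Real.div_rpow ht0.le hs0.le, inv_div]
        rw [heq2] at hb
        -- algebra
        set A := Finv (1 - 1/s)
        set B := Finv (1 - 1/t)
        set p := t ^ (1/α) with hpdef
        set q := s ^ (1/α) with hqdef
        have hp0 : 0 < p := Real.rpow_pos_of_pos ht0 _
        have hq0 : 0 < q := Real.rpow_pos_of_pos hs0 _
        have hpq : p ≤ q := Real.rpow_le_rpow ht0.le hts hia.le
        have hkeyeq : A/q - B/p = (B/q) * (A/B - q/p) := by
          field_simp
          all_goals ring
        have hBq : 0 < B/q := div_pos hDpos hq0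
        have hσE : sSup (S t) ≤ t ^ κ * sSup (S t) := by nlinarith
        calc |A/q - B/p| = (B/q) * |A/B - q/p| := by
              rw [hkeyeq, abs_mul, abs_of_pos hBq]
          _ ≤ (B/q) * sSup (S t) := mul_le_mul_of_nonneg_left hb hBq.le
          _ ≤ (B/p) * sSup (S t) := by gcongr
          _ ≤ (B/p) * (t ^ κ * sSup (S t)) :=
              mul_le_mul_of_nonneg_left hσE (div_pos hDpos hp0).le
      case hstep =>
        intro t ht
        show |Finv (1 - 1/(t ^ ((1:ℝ)+κ))) / (t ^ ((1:ℝ)+κ)) ^ (1/α) - Finv (1 - 1/t) / t ^ (1/α)| ≤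
          Finv (1 - 1/t) / t ^ (1/α) * (t ^ κ * sSup (S t)) * t ^ (-β)
        obtain ⟨hDpos, hptw, hσ0⟩ := main t ht
        obtain ⟨_, _, _, _, ht2⟩ := hcond t ht
        obtain ⟨ht0, ht1, hnk0, hnk1, hκ1'⟩ := hbase t ht2
        set s := t ^ ((1:ℝ)+κ) with hsdef
        have hts : t ≤ s := by
          calc t = t ^ (1:ℝ) := (Real.rpow_one t).symm
            _ ≤ t ^ ((1:ℝ)+κ) := Real.rpow_le_rpow_of_exponent_le ht1 (by linarith)
        have hs0 : (0:ℝ) < s := lt_of_lt_of_le ht0 hts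
        have hl1 : t ^ (-κ) ≤ t / s := by
          have h2 : t / s = t ^ (-κ) := by
            rw [hsdef, show t / t ^ ((1:ℝ)+κ) = t ^ (1:ℝ) / t ^ ((1:ℝ)+κ) by rw [Real.rpow_one],
              ← Real.rpow_sub ht0]
            norm_num
          linarith
        have hl2 : t / s ≤ t ^ κ := le_trans ((div_le_one hs0).mpr hts) hκ1'
        have hb := hptw (t/s) hl1 hl2
        have heq1 : (t/s)/t = 1/s := by rw [div_div, mul_comm s t, ← div_div, div_self ht0.ne', one_div]
        rw [heq1] at hb
        have heq2 : (t/s) ^ (-(1/α)) = s ^ (1/α) / t ^ (1/α) := by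
          rw [Real.rpow_neg (by positivity), Real.div_rpow ht0.le hs0.le, inv_div]
        rw [heq2] at hb
        set A := Finv (1 - 1/s)
        set B := Finv (1 - 1/t)
        set p := t ^ (1/α) with hpdef
        set q := s ^ (1/α) with hqdef
        have hp0 : 0 < p := Real.rpow_pos_of_pos ht0 _
        have hq0 : 0 < q := Real.rpow_pos_of_pos hs0 _
        have hkeyeq : A/q - B/p = (B/q) * (A/B - q/p) := by
          field_simp
          all_goals ring
        have hBq : 0 < B/q := div_pos hDpos hq0
        have hqeq : q = p * t ^ (κ*(1/α)) := by
          rw [hqdef, hpdef, hsdef, ← Real.rpow_mul ht0.le, ← Real.rpow_add ht0]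
          congr 1
          ring
        have hfinal : (B/q) * sSup (S t) =
            (B/p) * (t ^ κ * sSup (S t)) * t ^ (-β) := by
          have hx1 : t ^ κ * t ^ (-β) = (t ^ (κ*(1/α)))⁻¹ := by
            rw [← Real.rpow_add ht0, ← Real.rpow_neg ht0.le]
            congr 1
            rw [hβdef]; ring
          rw [hqeq, ← div_div, div_eq_mul_inv (B/p) (t ^ (κ*(1/α))), ← hx1]
          ring
        calc |A/q - B/p| = (B/q) * |A/B - q/p| := by
              rw [hkeyeq, abs_mul, abs_of_pos hBq]
          _ ≤ (B/q) * sSup (S t) := mul_le_mul_of_nonneg_left hb hBq.le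
          _ = (B/p) * (t ^ κ * sSup (S t)) * t ^ (-β) := hfinal
      -- final packaging
      obtain ⟨c, hcpos, hconc⟩ := hkey
      refine ⟨c, hcpos, fun s => Finv (1 - 1/s) / s ^ (1/α) / c - 1, ?_, ?_⟩
      · rw [Asymptotics.isLittleO_iff]
        intro C hC
        have h1 := hconc (c*C) (by positivity)
        filter_upwards [h1, eventually_ge_atTop (1:ℝ)] with s hs1 hs2
        replace hs1 : |Finv (1 - 1/s) / s ^ (1/α) - c| ≤ c*C*s ^ (-β) := hs1
        have hs0 : (0:ℝ) < s := by linarith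
        have hcne : c ≠ 0 := hcpos.ne'
        have heq : Finv (1 - 1/s) / s ^ (1/α) / c - 1 =
            (Finv (1 - 1/s) / s ^ (1/α) - c) / c := by
          field_simp
        rw [Real.norm_eq_abs, Real.norm_eq_abs, heq, abs_div, abs_of_pos hcpos,
          abs_of_nonneg (Real.rpow_nonneg hs0.le _)]
        rw [div_le_iff₀ hcpos]
        calc |Finv (1 - 1/s) / s ^ (1/α) - c| ≤ c * C * s ^ (-β) := hs1
          _ = C * s ^ (-(κ * (1 + 1/α))) * c := by rw [hβdef]; ring
      · filter_upwards [eventually_ge_atTop (1:ℝ)] with s hs1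
        have hs0 : (0:ℝ) < s := by linarith
        have hq0 : (0:ℝ) < s ^ (1/α) := Real.rpow_pos_of_pos hs0 _
        have hcne : c ≠ 0 := hcpos.ne'
        show Finv (1 - 1/s) = c * s ^ (1/α) * (1 + (Finv (1 - 1/s) / s ^ (1/α) / c - 1))
        field_simp [hcne, hq0.ne']
        ring
    · -- F ≥ 1 everywhere
      push_neg at hx₀e
      have hFinv0 : ∀ u : ℝ, u < 1 → Finv u = 0 := by
        intro u hu
        rw [hFinv u]
        have : {x : ℝ | u ≤ F x} = univ := by
          ext x
          simp only [mem_setOf_eq, mem_univ, iff_true]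
          linarith [hx₀e x]
        rw [this]
        apply Real.sInf_of_not_bddBelow
        rintro ⟨b, hb⟩
        have := hb (mem_univ (b-1))
        linarith
      have hge1 : ∀ᶠ t : ℝ in atTop, 1 ≤ t ^ κ * sSup (S t) := by
        filter_upwards [eventually_ge_atTop (2:ℝ)] with t ht2
        apply hdeg t ht2
        intro l hl
        apply hFinv0
        obtain ⟨ht0, ht1, hnk0, hnk1, hκ1'⟩ := hbase t ht2
        have : 0 < l / t := div_pos (lt_of_lt_of_le hnk0 hl.1) ht0
        linarith
      obtain ⟨t, h1, h2⟩ := (hlt1.and hge1).exists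
      linarith
  · -- sup F < 1
    push_neg at hsupF
    obtain ⟨u₀, hu₀1, hu₀⟩ := hsupF
    have hu₀' : ∀ x, F x < u₀ := by
      intro x
      have := hu₀ x
      exact this
    have hFinv0 : ∀ u : ℝ, u₀ ≤ u → Finv u = 0 := by
      intro u hu
      rw [hFinv u]
      have : {x : ℝ | u ≤ F x} = ∅ := by
        ext x
        simp only [mem_setOf_eq, mem_empty_iff_false, iff_false, not_le]
        exact lt_of_lt_of_le (hu₀' x) hu
      rw [this, Real.sInf_empty]
    have evκ1 : Tendsto (fun t : ℝ => t ^ (κ - 1)) atTop (nhds 0) := by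
      have := tendsto_rpow_neg_atTop (y := 1 - κ) (by linarith)
      simpa [neg_sub] using this
    have ev1 : ∀ᶠ t : ℝ in atTop, t ^ (κ-1) ≤ 1 - u₀ :=
      (evκ1.eventually_lt_const (by linarith)).mono (fun t h => h.le)
    have hge1 : ∀ᶠ t : ℝ in atTop, 1 ≤ t ^ κ * sSup (S t) := by
      filter_upwards [eventually_ge_atTop (2:ℝ), ev1] with t ht2 hev
      apply hdeg t ht2
      intro l hl
      obtain ⟨ht0, ht1, hnk0, hnk1, hκ1'⟩ := hbase t ht2
      apply hFinv0
      have htdiv : t ^ κ / t = t ^ (κ - 1) := by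
        rw [Real.rpow_sub ht0, Real.rpow_one]
      have : l / t ≤ t ^ κ / t := by gcongr; exact hl.2
      rw [htdiv] at this
      linarith
    obtain ⟨t, h1, h2⟩ := (hlt1.and hge1).exists
    linarith
end

section
/- Let α ∈ (1,2), κ > 0 with κ < 1 and κ < 2/(α+1), and c > 0. If F⁻(1 - 1/t) = c·t^{1/α}·(1 + o(t^{-κ(1+1/α)})) as t → ∞, then t^κ · sup_{t^{-κ} ≤ λ ≤ t^κ} |F⁻(1 - λ/t)/F⁻(1 - 1/t) - λ^{-1/α}| → 0 as t → ∞. -/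
open Filter Set

/-- If `F⁻(1-1/t) = c t^{1/α}(1 + o(t^{-κ(1+1/α)}))` with `c > 0`, then
`t^κ · sup_{t^{-κ} ≤ λ ≤ t^κ} |F⁻(1-λ/t)/F⁻(1-1/t) - λ^{-1/α}| → 0` as `t → ∞`. -/
theorem stmt1 (F : ℝ → ℝ) (hF : Monotone F)
    (Finv : ℝ → ℝ) (hFinv : ∀ u, Finv u = sInf {x : ℝ | u ≤ F x})
    (α κ c : ℝ) (hα1 : 1 < α) (hα2 : α < 2)
    (hκ0 : 0 < κ) (hκ1 : κ < 1) (hκ2 : κ < 2 / (α + 1)) (hc : 0 < c)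
    (hyp : ∃ δ : ℝ → ℝ,
      (δ =o[atTop] fun t : ℝ => t ^ (-(κ * (1 + 1 / α)))) ∧
      ∀ᶠ t : ℝ in atTop, Finv (1 - 1 / t) = c * t ^ (1 / α) * (1 + δ t)) :
    Tendsto
      (fun t : ℝ => t ^ κ *
        sSup ((fun l : ℝ => |Finv (1 - l / t) / Finv (1 - 1 / t) - l ^ (-(1 / α))|) ''
          Icc (t ^ (-κ)) (t ^ κ)))
      atTop (nhds 0) := by
  obtain ⟨δ, hδo, hδeq⟩ := hyp
  have hα0 : (0:ℝ) < α := by linarith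
  have hia : (0:ℝ) < 1/α := by positivity
  set β := κ * (1 + 1/α) with hβ
  have hβ0 : 0 < β := by positivity
  have hκα : κ * (α + 1) < 2 := (lt_div_iff₀ (by linarith)).mp hκ2
  have huα : α * (1/α) = 1 := mul_one_div_cancel hα0.ne'
  rw [NormedAddCommGroup.tendsto_nhds_zero]
  intro ε hε
  set η := min (ε/5) (1/2) with hηdef
  have hη0 : 0 < η := lt_min (by linarith) (by norm_num)
  have hη2 : η ≤ 1/2 := min_le_right _ _
  have hηε : 4*η < ε := by
    have := min_le_left (ε/5) (1/2); linarith
  obtain ⟨t1, ht1⟩ := eventually_atTop.mp ((hδo.def hη0).and hδeq)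
  set M := max t1 1 with hMdef
  have hM : ∀ s : ℝ, M ≤ s →
      |δ s| ≤ η * s ^ (-β) ∧ |δ s| ≤ 1/2 ∧ Finv (1 - 1/s) = c * s ^ (1/α) * (1 + δ s) := by
    intro s hs
    have hs1 : (1:ℝ) ≤ s := le_trans (le_max_right _ _) hs
    have hs0 : (0:ℝ) < s := by linarith
    obtain ⟨hb, heq⟩ := ht1 s (le_trans (le_max_left _ _) hs)
    have hnorm : ‖(fun t : ℝ => t ^ (-β)) s‖ = s ^ (-β) := by
      simp [Real.norm_eq_abs, abs_of_pos (Real.rpow_pos_of_pos hs0 _)]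
    have hb' : |δ s| ≤ η * s ^ (-β) := by
      have := hb; rw [Real.norm_eq_abs] at this
      simpa [hnorm] using this
    refine ⟨hb', ?_, heq⟩
    have h1 : s ^ (-β) ≤ 1 :=
      Real.rpow_le_one_of_one_le_of_nonpos hs1 (by linarith)
    calc |δ s| ≤ η * s ^ (-β) := hb'
      _ ≤ (1/2) * 1 := by
          apply mul_le_mul hη2 h1 (Real.rpow_pos_of_pos hs0 _).le (by norm_num)
      _ = 1/2 := by norm_num
  filter_upwards [eventually_ge_atTop (1:ℝ),
    (tendsto_rpow_atTop (show (0:ℝ) < 1-κ by linarith)).eventually_ge_atTop M]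
      with t ht1' htM
  have ht0 : (0:ℝ) < t := by linarith
  have httk : t ^ (1-κ) ≤ t := by
    nth_rewrite 2 [← Real.rpow_one t]
    exact Real.rpow_le_rpow_of_exponent_le ht1' (by linarith)
  have htMt : M ≤ t := le_trans htM httk
  obtain ⟨hδtb, hδt2, hFq⟩ := hM t htMt
  have hden : (1:ℝ)/2 ≤ 1 + δ t := by
    have := abs_le.mp hδt2; linarith [this.1]
  have hden0 : (0:ℝ) < 1 + δ t := by linarith
  have hFpos : 0 < Finv (1 - 1/t) := by
    rw [hFq]; positivity
  -- the key pointwise bound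
  have key : ∀ l ∈ Icc (t ^ (-κ)) (t ^ κ),
      |Finv (1 - l / t) / Finv (1 - 1 / t) - l ^ (-(1 / α))| ≤ 4*η*t^(-κ) := by
    rintro l ⟨hl1, hl2⟩
    have hl0 : 0 < l := lt_of_lt_of_le (Real.rpow_pos_of_pos ht0 _) hl1
    have htl1 : t ^ (1-κ) ≤ t / l := by
      have h1 : t / t ^ κ = t ^ (1-κ) := by
        rw [Real.rpow_sub ht0, Real.rpow_one]
      rw [← h1]
      gcongr
    have htlM : M ≤ t / l := le_trans htM htl1
    obtain ⟨hδlb, -, heql⟩ := hM (t/l) htlM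
    have hq2 : Finv (1 - l/t) = c * (t/l) ^ (1/α) * (1 + δ (t/l)) := by
      rw [← one_div_div t l]; exact heql
    have hpow : (t/l) ^ (1/α) = t ^ (1/α) * l ^ (-(1/α)) := by
      rw [Real.div_rpow ht0.le hl0.le, Real.rpow_neg hl0.le, div_eq_mul_inv]
    have hlpow : (0:ℝ) < l ^ (-(1/α)) := Real.rpow_pos_of_pos hl0 _
    have hta : t ^ (1/α) ≠ 0 := (Real.rpow_pos_of_pos ht0 _).ne'
    have hdiff : Finv (1 - l/t) / Finv (1 - 1/t) - l ^ (-(1/α))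
        = l ^ (-(1/α)) * (δ (t/l) - δ t) / (1 + δ t) := by
      rw [hq2, hFq, hpow]
      field_simp
      ring
    -- two elementary rpow bounds
    have hb2 : l ^ (-(1/α)) * |δ t| ≤ η * t ^ (-κ) := by
      have hll : l ^ (-(1/α)) ≤ t ^ (κ * (1/α)) := by
        have h := Real.rpow_le_rpow_of_nonpos (Real.rpow_pos_of_pos ht0 (-κ)) hl1
          (neg_nonpos.mpr hia.le)
        calc l ^ (-(1/α)) ≤ (t ^ (-κ)) ^ (-(1/α)) := h
          _ = t ^ ((-κ) * (-(1/α))) := (Real.rpow_mul ht0.le _ _).symm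
          _ = t ^ (κ * (1/α)) := by ring_nf
      calc l ^ (-(1/α)) * |δ t| ≤ t ^ (κ * (1/α)) * (η * t ^ (-β)) := by
            apply mul_le_mul hll hδtb (abs_nonneg _) (Real.rpow_pos_of_pos ht0 _).le
        _ = η * (t ^ (κ * (1/α)) * t ^ (-β)) := by ring
        _ = η * t ^ (κ * (1/α) + (-β)) := by rw [← Real.rpow_add ht0]
        _ = η * t ^ (-κ) := by rw [hβ]; ring_nf
    have hbl : l ^ (-(1/α)) * |δ (t/l)| ≤ η * t ^ (-κ) := by
      have htlneg : (t/l) ^ (-β) = t ^ (-β) * l ^ β := by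
        rw [Real.div_rpow ht0.le hl0.le, div_eq_mul_inv, ← Real.rpow_neg hl0.le, neg_neg]
      have hle : l ^ (β + (-(1/α))) ≤ t ^ (κ * (1/α)) := by
        rcases le_or_gt 0 (β + (-(1/α))) with he | he
        · calc l ^ (β + (-(1/α))) ≤ (t ^ κ) ^ (β + (-(1/α))) :=
              Real.rpow_le_rpow hl0.le hl2 he
            _ = t ^ (κ * (β + (-(1/α)))) := (Real.rpow_mul ht0.le _ _).symm
            _ ≤ t ^ (κ * (1/α)) := by
                apply Real.rpow_le_rpow_of_exponent_le ht1'
                have e1 : (α+1) * (1/α) = 1 + 1/α := by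
                  rw [add_mul, huα, one_mul]
                have h1 : β + (-(1/α)) ≤ 1/α := by
                  rw [hβ, ← e1]
                  linarith [mul_le_mul_of_nonneg_right hκα.le hia.le]
                exact mul_le_mul_of_nonneg_left h1 hκ0.le
        · calc l ^ (β + (-(1/α))) ≤ (t ^ (-κ)) ^ (β + (-(1/α))) :=
              Real.rpow_le_rpow_of_nonpos (Real.rpow_pos_of_pos ht0 _) hl1 he.le
            _ = t ^ ((-κ) * (β + (-(1/α)))) := (Real.rpow_mul ht0.le _ _).symm
            _ ≤ t ^ (κ * (1/α)) := by
                apply Real.rpow_le_rpow_of_exponent_le ht1'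
                linarith [mul_nonneg hκ0.le hβ0.le]
      calc l ^ (-(1/α)) * |δ (t/l)| ≤ l ^ (-(1/α)) * (η * (t/l) ^ (-β)) := by
            apply mul_le_mul_of_nonneg_left hδlb hlpow.le
        _ = η * (t ^ (-β) * (l ^ (-(1/α)) * l ^ β)) := by rw [htlneg]; ring
        _ = η * (t ^ (-β) * l ^ (β + (-(1/α)))) := by
            rw [← Real.rpow_add hl0]; ring_nf
        _ ≤ η * (t ^ (-β) * t ^ (κ * (1/α))) := by
            apply mul_le_mul_of_nonneg_left _ hη0.le
            apply mul_le_mul_of_nonneg_left hle (Real.rpow_pos_of_pos ht0 _).le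
        _ = η * t ^ (-β + κ * (1/α)) := by rw [← Real.rpow_add ht0]
        _ = η * t ^ (-κ) := by rw [hβ]; ring_nf
    calc |Finv (1 - l/t) / Finv (1 - 1/t) - l ^ (-(1/α))|
        = l ^ (-(1/α)) * |δ (t/l) - δ t| / (1 + δ t) := by
          rw [hdiff, abs_div, abs_mul, abs_of_pos hlpow, abs_of_pos hden0]
      _ ≤ l ^ (-(1/α)) * (|δ (t/l)| + |δ t|) / (1/2) := by
          apply div_le_div₀ (by positivity) ?_ (by norm_num) hden
          apply mul_le_mul_of_nonneg_left (abs_sub _ _) hlpow.le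
      _ = 2*(l ^ (-(1/α)) * |δ (t/l)|) + 2*(l ^ (-(1/α)) * |δ t|) := by ring
      _ ≤ 2*(η * t^(-κ)) + 2*(η * t^(-κ)) := by linarith
      _ = 4*η*t^(-κ) := by ring
  -- the supremum
  set S := (fun l : ℝ => |Finv (1 - l / t) / Finv (1 - 1 / t) - l ^ (-(1 / α))|) ''
      Icc (t ^ (-κ)) (t ^ κ) with hSdef
  have h1mem : (1:ℝ) ∈ Icc (t ^ (-κ)) (t ^ κ) := by
    constructor
    · exact Real.rpow_le_one_of_one_le_of_nonpos ht1' (by linarith)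
    · calc (1:ℝ) = t ^ (0:ℝ) := (Real.rpow_zero t).symm
        _ ≤ t ^ κ := Real.rpow_le_rpow_of_exponent_le ht1' hκ0.le
  have hmem0 : (0:ℝ) ∈ S := by
    refine ⟨1, h1mem, ?_⟩
    show |Finv (1 - 1/t) / Finv (1 - 1/t) - (1:ℝ) ^ (-(1/α))| = 0
    rw [Real.one_rpow, div_self hFpos.ne', sub_self, abs_zero]
  have hub : ∀ x ∈ S, x ≤ 4*η*t^(-κ) := by
    rintro x ⟨l, hl, rfl⟩; exact key l hl
  have hbdd : BddAbove S := ⟨4*η*t^(-κ), hub⟩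
  have hsup_le : sSup S ≤ 4*η*t^(-κ) := csSup_le ⟨0, hmem0⟩ hub
  have hsup0 : 0 ≤ sSup S := le_csSup hbdd hmem0
  have htκ : (0:ℝ) < t ^ κ := Real.rpow_pos_of_pos ht0 _
  rw [Real.norm_eq_abs, abs_of_nonneg (mul_nonneg htκ.le hsup0)]
  calc t ^ κ * sSup S ≤ t ^ κ * (4*η*t^(-κ)) := by
        exact mul_le_mul_of_nonneg_left hsup_le htκ.le
    _ = 4*η*(t^κ * t^(-κ)) := by ring
    _ = 4*η := by rw [← Real.rpow_add ht0]; simp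
    _ < ε := hηε
end

section
/- Let α ∈ (1,2), κ > 0 with κ < 1 and κ < 2/(α+1), c > 0, and suppose F is a continuous, strictly increasing distribution function. Then F⁻(1-1/t) = c·t^{1/α}·(1 + o(t^{-κ(1+1/α)})) as t → ∞ if and only if 1 - F(x) = (c/x)^α · (1 + o(x^{-κ(α+1)})) as x → ∞. -/
open Filter Set

lemma rpow_neg_le_rpow_neg {a b e : ℝ} (ha : 0 < a) (hab : a ≤ b) (he : 0 ≤ e) :
    b ^ (-e) ≤ a ^ (-e) := by
  have hb : 0 < b := ha.trans_le hab
  rw [Real.rpow_neg ha.le, Real.rpow_neg hb.le]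
  exact inv_anti₀ (Real.rpow_pos_of_pos ha e) (Real.rpow_le_rpow ha.le hab he)

lemma abs_rpow_sub_one_le_big {α d : ℝ} (h1 : 1 ≤ α) (h2 : α ≤ 2) (hd : |d| ≤ 1/2) :
    |(1 + d) ^ α - 1| ≤ 3 * |d| := by
  have hd1 : -(1/2) ≤ d := neg_le_of_abs_le hd
  have hd2 : d ≤ 1/2 := le_of_abs_le hd
  have hpos : (0:ℝ) < 1 + d := by linarith
  have hsq : (1+d) ^ (2:ℝ) = (1+d)*(1+d) := by
    rw [show (2:ℝ) = ((2:ℕ):ℝ) by norm_num, Real.rpow_natCast]; ring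
  rcases le_or_gt 0 d with h | h
  · have hb : (1:ℝ) ≤ 1 + d := by linarith
    have hlow : (1:ℝ) ≤ (1+d)^α := by
      calc (1:ℝ) = 1 ^ α := (Real.one_rpow α).symm
      _ ≤ (1+d)^α := Real.rpow_le_rpow zero_le_one hb (by linarith)
    have hhigh : (1+d)^α ≤ (1+d)^(2:ℝ) := Real.rpow_le_rpow_of_exponent_le hb h2
    rw [hsq] at hhigh
    rw [abs_of_nonneg (by linarith), abs_of_nonneg h]
    nlinarith
  · have hb : 1 + d ≤ 1 := by linarith
    have hhigh : (1+d)^α ≤ (1+d)^(1:ℝ) := Real.rpow_le_rpow_of_exponent_ge hpos hb h1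
    have hlow : (1+d)^(2:ℝ) ≤ (1+d)^α := Real.rpow_le_rpow_of_exponent_ge hpos hb h2
    rw [Real.rpow_one] at hhigh
    rw [hsq] at hlow
    rw [abs_of_nonpos (by linarith), abs_of_neg h]
    nlinarith

lemma abs_rpow_sub_one_le_small {p e : ℝ} (h0 : 0 ≤ p) (h1 : p ≤ 1) (he : |e| ≤ 1/2) :
    |(1 + e) ^ p - 1| ≤ |e| := by
  have he1 : -(1/2) ≤ e := neg_le_of_abs_le he
  have he2 : e ≤ 1/2 := le_of_abs_le he
  have hpos : (0:ℝ) < 1 + e := by linarith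
  rcases le_or_gt 0 e with h | h
  · have hb : (1:ℝ) ≤ 1 + e := by linarith
    have hlow : (1:ℝ) ≤ (1+e)^p := by
      calc (1:ℝ) = 1 ^ p := (Real.one_rpow p).symm
      _ ≤ (1+e)^p := Real.rpow_le_rpow zero_le_one hb h0
    have hhigh : (1+e)^p ≤ (1+e)^(1:ℝ) := Real.rpow_le_rpow_of_exponent_le hb h1
    rw [Real.rpow_one] at hhigh
    rw [abs_of_nonneg (by linarith), abs_of_nonneg h]; linarith
  · have hb : 1 + e ≤ 1 := by linarith
    have hhigh : (1+e)^p ≤ 1 := Real.rpow_le_one hpos.le hb h0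
    have hlow : (1+e)^(1:ℝ) ≤ (1+e)^p := Real.rpow_le_rpow_of_exponent_ge hpos hb h1
    rw [Real.rpow_one] at hlow
    rw [abs_of_nonpos (by linarith), abs_of_neg h]; linarith

set_option maxHeartbeats 1000000 in
/-- For a continuous strictly increasing distribution function `F` with
genuine inverse `F⁻`, `F⁻(1-1/t) = c t^{1/α}(1 + o(t^{-κ(1+1/α)}))` iff
`1 - F(x) = (c/x)^α (1 + o(x^{-κ(α+1)}))`. -/
theorem stmt2 (F : ℝ → ℝ) (hFcont : Continuous F) (hFmono : StrictMono F)
    (Finv : ℝ → ℝ)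
    (hFinv_left : ∀ x : ℝ, Finv (F x) = x)
    (hFinv_right : ∀ u ∈ Ioo (0 : ℝ) 1, F (Finv u) = u)
    (α κ c : ℝ) (hα1 : 1 < α) (hα2 : α < 2)
    (hκ0 : 0 < κ) (hκ1 : κ < 1) (hκ2 : κ < 2 / (α + 1)) (hc : 0 < c) :
    (∃ δ : ℝ → ℝ,
      (δ =o[atTop] fun t : ℝ => t ^ (-(κ * (1 + 1 / α)))) ∧
      ∀ᶠ t : ℝ in atTop, Finv (1 - 1 / t) = c * t ^ (1 / α) * (1 + δ t)) ↔
    (∃ ε : ℝ → ℝ,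
      (ε =o[atTop] fun x : ℝ => x ^ (-(κ * (α + 1)))) ∧
      ∀ᶠ x : ℝ in atTop, 1 - F x = (c / x) ^ α * (1 + ε x)) := by
  have hα0 : (0:ℝ) < α := by linarith
  have hα0' : α ≠ 0 := ne_of_gt hα0
  have hβpos : 0 < κ * (1 + 1/α) := by positivity
  have hγpos : 0 < κ * (α + 1) := by positivity
  constructor
  · rintro ⟨δ, hδo, hδeq⟩
    have hδ0 : Tendsto δ atTop (nhds 0) :=
      hδo.isBigO.trans_tendsto (tendsto_rpow_neg_atTop hβpos)
    have hδ1 : Tendsto (fun t => 1 + δ t) atTop (nhds 1) := by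
      simpa using hδ0.const_add 1
    have hRHS : Tendsto (fun t : ℝ => c * t ^ (1/α) * (1 + δ t)) atTop atTop :=
      Filter.Tendsto.atTop_mul_pos one_pos
        ((tendsto_rpow_atTop (by positivity)).const_mul_atTop hc) hδ1
    have hev : (fun t : ℝ => Finv (1 - 1/t)) =ᶠ[atTop]
        (fun t : ℝ => c * t ^ (1/α) * (1 + δ t)) := hδeq
    have hFinvTop : Tendsto (fun t : ℝ => Finv (1 - 1/t)) atTop atTop :=
      hRHS.congr' hev.symm
    -- F < 1 everywhere
    have hFlt : ∀ x, F x < 1 := by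
      intro x
      by_contra hx
      push_neg at hx
      obtain ⟨t, ht1, ht2⟩ := ((hFinvTop.eventually_gt_atTop x).and (eventually_gt_atTop (1:ℝ))).exists
      have ht0 : (0:ℝ) < t := by linarith
      have hmem : 1 - 1/t ∈ Ioo (0:ℝ) 1 := by
        constructor
        · have : 1/t < 1 := by rw [div_lt_one ht0]; linarith
          linarith
        · have : 0 < 1/t := by positivity
          linarith
      have hval := hFinv_right _ hmem
      have hlt : F x < F (Finv (1 - 1/t)) := hFmono ht1
      rw [hval] at hlt
      have : 0 < 1/t := by positivity
      linarith
    -- T x := (1 - F x)⁻¹ tends to atTop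
    have hTtop : Tendsto (fun x => (1 - F x)⁻¹) atTop atTop := by
      rw [tendsto_atTop]
      intro M
      set t₀ := max M 2 with ht₀def
      have ht₀2 : (2:ℝ) ≤ t₀ := le_max_right _ _
      have ht₀M : M ≤ t₀ := le_max_left _ _
      set x₀ := Finv (1 - 1/t₀) with hx₀def
      have ht₀0 : (0:ℝ) < t₀ := by linarith
      have hmem : 1 - 1/t₀ ∈ Ioo (0:ℝ) 1 := by
        constructor
        · have : 1/t₀ ≤ 1/2 := by
            rw [div_le_div_iff₀ ht₀0 (by norm_num)]; linarith
          linarith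
        · have : 0 < 1/t₀ := by positivity
          linarith
      have hFx₀ : F x₀ = 1 - 1/t₀ := hFinv_right _ hmem
      filter_upwards [eventually_ge_atTop x₀] with x hx
      have hmono : F x₀ ≤ F x := hFmono.monotone hx
      have h1 : 0 < 1 - F x := by linarith [hFlt x]
      have h2 : 1 - F x ≤ 1/t₀ := by rw [hFx₀] at hmono; linarith
      calc M ≤ t₀ := ht₀M
      _ = (1/t₀)⁻¹ := by rw [one_div, inv_inv]
      _ ≤ (1 - F x)⁻¹ := by gcongr
    -- eventual smallness of δ
    have hhalf : ∀ᶠ t : ℝ in atTop, |δ t| ≤ 1/2 := by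
      have h := (NormedAddCommGroup.tendsto_nhds_zero.mp hδ0) (1/2) (by norm_num)
      filter_upwards [h] with t ht
      rw [Real.norm_eq_abs] at ht; linarith
    obtain ⟨t₁, ht₁⟩ := eventually_atTop.mp hδeq
    have hkey : ∀ᶠ x : ℝ in atTop,
        0 < (1 - F x)⁻¹ ∧ |δ ((1 - F x)⁻¹)| ≤ 1/2 ∧
        x = c * ((1 - F x)⁻¹) ^ (1/α) * (1 + δ ((1 - F x)⁻¹)) := by
      filter_upwards [hTtop.eventually (eventually_ge_atTop t₁),
          hTtop.eventually hhalf] with x hT₁ hδhalf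
      have h1 : 0 < 1 - F x := by linarith [hFlt x]
      have hT0 : 0 < (1 - F x)⁻¹ := by positivity
      refine ⟨hT0, hδhalf, ?_⟩
      have hFx : F x = 1 - 1/((1 - F x)⁻¹) := by
        rw [one_div, inv_inv]; ring
      have heq := ht₁ _ hT₁
      rw [← hFx, hFinv_left] at heq
      exact heq
    refine ⟨fun x => (1 + δ ((1 - F x)⁻¹)) ^ α - 1, ?_, ?_⟩
    · -- littleO
      rw [Asymptotics.isLittleO_iff]
      intro C hC
      set a := 2/(3*c) with ha_def
      have ha : 0 < a := by positivity
      set C' := C * a ^ (κ*(α+1)) / 3 with hC'def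
      have hC' : 0 < C' := by positivity
      have hδbound := Asymptotics.isLittleO_iff.mp hδo hC'
      filter_upwards [hkey, hTtop.eventually hδbound, eventually_gt_atTop (0:ℝ)] with x hk hbx hx0
      obtain ⟨hT0, hdh, hxeq⟩ := hk
      simp only [Real.norm_eq_abs] at hbx ⊢
      set T := (1 - F x)⁻¹ with hTdef
      set d := δ T with hddef
      have hd2 := abs_le.mp hdh
      have hr : 0 < T ^ (1/α) := Real.rpow_pos_of_pos hT0 _
      have hTlow : (a * x) ^ α ≤ T := by
        have hle1 : x ≤ c * T ^ (1/α) * (3/2) := by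
          calc x = c * T ^ (1/α) * (1 + d) := hxeq
          _ ≤ c * T ^ (1/α) * (3/2) := by nlinarith [hd2.2]
        have h1 : a * x ≤ T ^ (1/α) := by
          calc a * x ≤ a * (c * T ^ (1/α) * (3/2)) := by nlinarith
          _ = T ^ (1/α) := by rw [ha_def]; field_simp
        calc (a*x)^α ≤ (T ^ (1/α))^α :=
              Real.rpow_le_rpow (by positivity) h1 hα0.le
        _ = T := by
            rw [← Real.rpow_mul hT0.le, one_div_mul_cancel hα0', Real.rpow_one]
      have hax : 0 < a * x := by positivity
      have hTneg : T ^ (-(κ*(1+1/α))) ≤ ((a*x)^α) ^ (-(κ*(1+1/α))) :=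
        rpow_neg_le_rpow_neg (by positivity) hTlow (by positivity)
      have heq2 : ((a*x)^α) ^ (-(κ*(1+1/α))) = a^(-(κ*(α+1))) * x^(-(κ*(α+1))) := by
        rw [← Real.rpow_mul hax.le]
        have hexp : α * -(κ*(1+1/α)) = -(κ*(α+1)) := by field_simp
        rw [hexp, Real.mul_rpow ha.le hx0.le]
      have habs : |(1 + d) ^ α - 1| ≤ 3 * |d| :=
        abs_rpow_sub_one_le_big hα1.le hα2.le hdh
      have hTβ : (0:ℝ) < T ^ (-(κ*(1+1/α))) := Real.rpow_pos_of_pos hT0 _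
      have hxγ : (0:ℝ) < x ^ (-(κ*(α+1))) := Real.rpow_pos_of_pos hx0 _
      rw [abs_of_pos hTβ] at hbx
      rw [abs_of_pos hxγ]
      have hone : a ^ (κ*(α+1)) * a ^ (-(κ*(α+1))) = 1 := by
        rw [← Real.rpow_add ha]; simp
      calc |(1 + d) ^ α - 1| ≤ 3 * |d| := habs
      _ ≤ 3 * (C' * T ^ (-(κ*(1+1/α)))) := by linarith
      _ ≤ 3 * (C' * (a^(-(κ*(α+1))) * x^(-(κ*(α+1))))) := by
          rw [← heq2]
          nlinarith [hC'.le]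
      _ = C * (a ^ (κ*(α+1)) * a ^ (-(κ*(α+1)))) * x ^ (-(κ*(α+1))) := by
          rw [hC'def]; ring
      _ = C * x ^ (-(κ*(α+1))) := by rw [hone]; ring
    · -- eventual equation
      filter_upwards [hkey, eventually_gt_atTop (0:ℝ)] with x hk hx0
      obtain ⟨hT0, hdh, hxeq⟩ := hk
      show 1 - F x = (c / x) ^ α * (1 + ((1 + δ ((1 - F x)⁻¹)) ^ α - 1))
      set T := (1 - F x)⁻¹ with hTdef
      set d := δ T with hddef
      have hd2 := abs_le.mp hdh
      have hd : 0 < 1 + d := by linarith [hd2.1]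
      have h1 : 1 + ((1 + d) ^ α - 1) = (1 + d)^α := by ring
      rw [h1, ← Real.mul_rpow (by positivity) hd.le]
      have hr : 0 < T ^ (1/α) := Real.rpow_pos_of_pos hT0 _
      have h3 : (c/x) * (1 + d) = (T ^ (1/α))⁻¹ := by
        rw [hxeq]
        field_simp
      rw [h3, ← Real.rpow_neg hT0.le, ← Real.rpow_mul hT0.le]
      have hexp : 1/α*(-1) = -(1/α) := by ring
      have hexp2 : -(1/α)*α = -1 := by field_simp
      rw [hexp2, Real.rpow_neg hT0.le, Real.rpow_one, hTdef, inv_inv]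
  · rintro ⟨ε, hεo, hεeq⟩
    have hε0 : Tendsto ε atTop (nhds 0) :=
      hεo.isBigO.trans_tendsto (tendsto_rpow_neg_atTop hγpos)
    have hεhalf : ∀ᶠ x : ℝ in atTop, |ε x| ≤ 1/2 := by
      have h := (NormedAddCommGroup.tendsto_nhds_zero.mp hε0) (1/2) (by norm_num)
      filter_upwards [h] with x hx
      rw [Real.norm_eq_abs] at hx; linarith
    obtain ⟨x₁, hx₁⟩ := eventually_atTop.mp
      (hεeq.and (hεhalf.and (eventually_ge_atTop (1:ℝ))))
    -- for x ≥ x₁ we have F x < 1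
    have hFlt : ∀ x, x₁ ≤ x → F x < 1 := by
      intro x hx
      obtain ⟨heq, heh, hx1⟩ := hx₁ x hx
      have hx0 : (0:ℝ) < x := by linarith
      have h1 : 0 < (c/x)^α * (1 + ε x) := by
        have h2 : 0 < 1 + ε x := by
          have := abs_le.mp heh; linarith [this.1]
        have h3 : 0 < (c/x)^α := Real.rpow_pos_of_pos (by positivity) α
        positivity
      rw [← heq] at h1; linarith
    -- X t := Finv (1 - 1/t) tends to atTop
    have hXtop : Tendsto (fun t : ℝ => Finv (1 - 1/t)) atTop atTop := by
      rw [tendsto_atTop]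
      intro M
      set M' := max M x₁ with hM'def
      have hFM : F M' < 1 := hFlt M' (le_max_right _ _)
      have h1FM : 0 < 1 - F M' := by linarith
      filter_upwards [eventually_ge_atTop (max 2 (2/(1 - F M')))] with t ht
      have ht2 : (2:ℝ) ≤ t := le_trans (le_max_left _ _) ht
      have ht3 : 2/(1 - F M') ≤ t := le_trans (le_max_right _ _) ht
      have ht0 : (0:ℝ) < t := by linarith
      have hlt : 1/t < 1 - F M' := by
        have h4 : 1/t ≤ (1 - F M')/2 := by
          rw [div_le_div_iff₀ ht0 (by norm_num)]
          rw [div_le_iff₀ h1FM] at ht3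
          linarith
        linarith
      have h1t : 0 < 1/t := by positivity
      have h1t2 : 1/t ≤ 1/2 := by
        rw [div_le_div_iff₀ ht0 (by norm_num)]; linarith
      have hmem : 1 - 1/t ∈ Ioo (0:ℝ) 1 := ⟨by linarith, by linarith⟩
      have hFX : F (Finv (1 - 1/t)) = 1 - 1/t := hFinv_right _ hmem
      have hcmp : F M' < F (Finv (1 - 1/t)) := by rw [hFX]; linarith
      have := hFmono.lt_iff_lt.mp hcmp
      calc M ≤ M' := le_max_left _ _
      _ ≤ Finv (1 - 1/t) := this.le
    -- key eventual facts in t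
    have hkey : ∀ᶠ t : ℝ in atTop,
        |ε (Finv (1 - 1/t))| ≤ 1/2 ∧ 1 ≤ Finv (1 - 1/t) ∧ 0 < t ∧
        Finv (1 - 1/t) = c * t ^ (1/α) * (1 + ε (Finv (1 - 1/t))) ^ (1/α) := by
      filter_upwards [hXtop.eventually (eventually_ge_atTop x₁),
          eventually_ge_atTop (2:ℝ)] with t hX ht2
      obtain ⟨heq, heh, hX1⟩ := hx₁ _ hX
      have ht0 : (0:ℝ) < t := lt_of_lt_of_le two_pos ht2
      refine ⟨heh, hX1, ht0, ?_⟩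
      set X := Finv (1 - 1/t) with hXdef
      set e := ε X with hedef
      have hX0 : (0:ℝ) < X := by linarith
      have h1t : 0 < 1/t := by positivity
      have h1t2 : 1/t ≤ 1/2 := by
        rw [div_le_div_iff₀ ht0 (by norm_num)]; linarith
      have hmem : 1 - 1/t ∈ Ioo (0:ℝ) 1 := ⟨by linarith, by linarith⟩
      have hFX : F X = 1 - 1/t := hFinv_right _ hmem
      have he0 : 0 < 1 + e := by
        have := abs_le.mp heh; linarith [this.1]
      have h1 : 1/t = (c/X)^α * (1 + e) := by
        rw [hFX] at heq
        have h2 : (1:ℝ) - (1 - 1/t) = 1/t := by ring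
        rw [h2] at heq
        exact heq
      have hXα0 : 0 < X ^ α := Real.rpow_pos_of_pos hX0 α
      have hcα0 : 0 < c ^ α := Real.rpow_pos_of_pos hc α
      have hXα : X ^ α = c^α * t * (1+e) := by
        have hcX : (c/X)^α = c^α / X^α := Real.div_rpow hc.le hX0.le α
        rw [hcX] at h1
        field_simp at h1
        linarith
      calc X = (X ^ α) ^ (1/α) := by
            rw [← Real.rpow_mul hX0.le, mul_one_div_cancel hα0', Real.rpow_one]
      _ = (c^α * t * (1+e)) ^ (1/α) := by rw [hXα]
      _ = c * t^(1/α) * (1+e)^(1/α) := by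
          rw [Real.mul_rpow (by positivity) he0.le,
              Real.mul_rpow (by positivity) ht0.le,
              ← Real.rpow_mul hc.le, mul_one_div_cancel hα0', Real.rpow_one]
    refine ⟨fun t => (1 + ε (Finv (1 - 1/t))) ^ (1/α) - 1, ?_, ?_⟩
    · -- littleO
      rw [Asymptotics.isLittleO_iff]
      intro C hC
      set a := c * (1/2 : ℝ)^(1/α) with ha_def
      have ha : 0 < a := by positivity
      set C' := C * a ^ (κ*(α+1)) with hC'def
      have hC' : 0 < C' := by positivity
      have hεbound := Asymptotics.isLittleO_iff.mp hεo hC'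
      filter_upwards [hkey, hXtop.eventually hεbound] with t hk hb
      obtain ⟨heh, hX1, ht0, hXeq⟩ := hk
      simp only [Real.norm_eq_abs] at hb ⊢
      set X := Finv (1 - 1/t) with hXdef
      set e := ε X with hedef
      have hX0 : (0:ℝ) < X := by linarith
      have he2 := abs_le.mp heh
      have habs : |(1 + e) ^ (1/α) - 1| ≤ |e| :=
        abs_rpow_sub_one_le_small (by positivity) (by
          rw [div_le_one hα0]; linarith) heh
      have htα : 0 < t ^ (1/α) := Real.rpow_pos_of_pos ht0 _
      have hXlow : a * t^(1/α) ≤ X := by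
        have h5a : (1/2 : ℝ) ≤ 1 + e := by linarith [he2.1]
        have h5 : (1/2 : ℝ)^(1/α) ≤ (1+e)^(1/α) :=
          Real.rpow_le_rpow (by norm_num) h5a (by positivity)
        calc a * t^(1/α) = c * t^(1/α) * (1/2 : ℝ)^(1/α) := by rw [ha_def]; ring
        _ ≤ c * t^(1/α) * (1+e)^(1/α) := by
            have hct : (0:ℝ) ≤ c * t^(1/α) := by positivity
            exact mul_le_mul_of_nonneg_left h5 hct
        _ = X := hXeq.symm
      have h2 : X ^ (-(κ*(α+1))) ≤ (a * t^(1/α)) ^ (-(κ*(α+1))) :=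
        rpow_neg_le_rpow_neg (by positivity) hXlow (by positivity)
      have h3 : (a * t^(1/α)) ^ (-(κ*(α+1))) = a ^ (-(κ*(α+1))) * t ^ (-(κ*(1+1/α))) := by
        rw [Real.mul_rpow ha.le htα.le, ← Real.rpow_mul ht0.le]
        have hexp : 1/α * -(κ*(α+1)) = -(κ*(1+1/α)) := by
          field_simp
        rw [hexp]
      have hXγ : (0:ℝ) < X ^ (-(κ*(α+1))) := Real.rpow_pos_of_pos hX0 _
      have htβ : (0:ℝ) < t ^ (-(κ*(1+1/α))) := Real.rpow_pos_of_pos ht0 _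
      rw [abs_of_pos hXγ] at hb
      rw [abs_of_pos htβ]
      have hone : a ^ (κ*(α+1)) * a ^ (-(κ*(α+1))) = 1 := by
        rw [← Real.rpow_add ha]; simp
      calc |(1 + e) ^ (1/α) - 1| ≤ |e| := habs
      _ ≤ C' * X ^ (-(κ*(α+1))) := hb
      _ ≤ C' * (a ^ (-(κ*(α+1))) * t ^ (-(κ*(1+1/α)))) := by
          rw [← h3]
          nlinarith [hC'.le]
      _ = C * (a ^ (κ*(α+1)) * a ^ (-(κ*(α+1)))) * t ^ (-(κ*(1+1/α))) := by
          rw [hC'def]; ring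
      _ = C * t ^ (-(κ*(1+1/α))) := by rw [hone]; ring
    · -- eventual equation
      filter_upwards [hkey] with t hk
      obtain ⟨heh, hX1, ht0, hXeq⟩ := hk
      show Finv (1 - 1/t) = c * t ^ (1/α) * (1 + ((1 + ε (Finv (1 - 1/t))) ^ (1/α) - 1))
      rw [show (1:ℝ) + ((1 + ε (Finv (1 - 1/t))) ^ (1/α) - 1)
            = (1 + ε (Finv (1 - 1/t))) ^ (1/α) from by ring]
      exact hXeq
end

section
/- Let F be a distribution function on ℝ with finite mean zero such that the upper tail 1-F is regularly varying of index -α with α > 1. Then there exist distribution functions F_U and F_L and r ∈ (0,1) such that: (i) the support of F_U is bounded below and the support of F_L is bounded above; (ii) both F_U and F_L have mean zero; (iii) F = r·F_U + (1-r)·F_L. -/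
open Filter Set MeasureTheory


private lemma pos_setInt (μ : Measure ℝ) {s : Set ℝ} (hs : MeasurableSet s)
    (hsub : ∀ x ∈ s, 0 < x) (hi : IntegrableOn (fun x : ℝ => x) s μ)
    (hμ : 0 < μ s) : 0 < ∫ x in s, x ∂μ := by
  rw [setIntegral_pos_iff_support_of_nonneg_ae
    ((ae_restrict_iff' hs).2 (Filter.Eventually.of_forall fun x hx => (hsub x hx).le)) hi]
  have h1 : Function.support (fun x : ℝ => x) ∩ s = s :=
    inter_eq_right.2 (fun x hx => ne_of_gt (hsub x hx))
  rwa [h1]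

private lemma neg_setInt (μ : Measure ℝ) {s : Set ℝ} (hs : MeasurableSet s)
    (hsub : ∀ x ∈ s, x < 0) (hi : IntegrableOn (fun x : ℝ => x) s μ)
    (hμ : 0 < μ s) : ∫ x in s, x ∂μ < 0 := by
  have h0 : (0:ℝ) < ∫ x in s, -x ∂μ := by
    rw [setIntegral_pos_iff_support_of_nonneg_ae
      ((ae_restrict_iff' hs).2 (Filter.Eventually.of_forall fun x hx => by
        simpa using (hsub x hx).le)) (show IntegrableOn (fun x : ℝ => -x) s μ from hi.neg)]
    have h1 : Function.support (fun x : ℝ => -x) ∩ s = s :=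
      inter_eq_right.2 (fun x hx => by simp [ne_of_lt (hsub x hx)])
    rwa [h1]
  have h2 : ∫ x in s, -x ∂μ = - ∫ x in s, x ∂μ := by
    exact integral_neg _
  linarith

/-- A centered distribution with regularly varying upper tail of index `-α`,
`α > 1`, decomposes as `F = r F_U + (1-r) F_L` with `F_U` centered and supported on a
half-line bounded below, `F_L` centered and supported on a half-line bounded above. -/
theorem stmt6 (μ : Measure ℝ) [IsProbabilityMeasure μ]
    (hint : Integrable (fun x : ℝ => x) μ)
    (hcent : ∫ x, x ∂μ = 0)
    (α : ℝ) (hα : 1 < α)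
    (htailpos : ∀ x : ℝ, 0 < 1 - (μ (Iic x)).toReal)
    (hRV : ∀ l : ℝ, 0 < l →
      Tendsto (fun x : ℝ => (1 - (μ (Iic (l * x))).toReal) / (1 - (μ (Iic x)).toReal))
        atTop (nhds (l ^ (-α)))) :
    ∃ (μU μL : Measure ℝ) (r : ℝ),
      IsProbabilityMeasure μU ∧ IsProbabilityMeasure μL ∧
      0 < r ∧ r < 1 ∧
      (∃ a : ℝ, μU (Iio a) = 0) ∧
      (∃ b : ℝ, μL (Ioi b) = 0) ∧
      Integrable (fun x : ℝ => x) μU ∧ (∫ x, x ∂μU) = 0 ∧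
      Integrable (fun x : ℝ => x) μL ∧ (∫ x, x ∂μL) = 0 ∧
      μ = ENNReal.ofReal r • μU + ENNReal.ofReal (1 - r) • μL := by
  clear hRV hα
  -- positivity of upper tail measure
  have htail : ∀ x : ℝ, 0 < μ (Ioi x) := by
    intro x
    have h := htailpos x
    have hfin : μ (Iic x) ≠ ⊤ := measure_ne_top μ _
    have h1 : μ (Iic x) < 1 := by
      rw [← ENNReal.ofReal_one]
      refine (ENNReal.lt_ofReal_iff_toReal_lt hfin).2 (by linarith)
    have hcompl : μ (Ioi x) = 1 - μ (Iic x) := by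
      rw [← compl_Iic]
      exact prob_compl_eq_one_sub measurableSet_Iic
    rw [hcompl]
    exact tsub_pos_of_lt h1
  have hiOn : ∀ s : Set ℝ, IntegrableOn (fun x : ℝ => x) s μ := fun s => hint.integrableOn
  -- the negative part carries negative integral
  have hIoi1pos : 0 < ∫ x in Ioi (1:ℝ), x ∂μ :=
    pos_setInt μ measurableSet_Ioi (fun x hx => lt_trans one_pos hx) (hiOn _) (htail 1)
  have hIci0 : (0:ℝ) < ∫ x in Ici (0:ℝ), x ∂μ := by
    have hmono : ∫ x in Ioi (1:ℝ), x ∂μ ≤ ∫ x in Ici (0:ℝ), x ∂μ := by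
      refine setIntegral_mono_set (hiOn _)
        ((ae_restrict_iff' measurableSet_Ici).2 (Filter.Eventually.of_forall fun x hx => hx))
        (Filter.Eventually.of_forall fun x hx => le_of_lt (lt_of_le_of_lt one_pos.le hx))
    linarith
  have hIio0int : ∫ x in Iio (0:ℝ), x ∂μ < 0 := by
    have h := integral_add_compl (s := Iio (0:ℝ)) measurableSet_Iio hint (f := fun x : ℝ => x)
    rw [compl_Iio, hcent] at h
    linarith
  -- choose K with negative integral over Ico (-K) 0
  have hKex : ∃ K : ℕ, ∫ x in Ico (-(K:ℝ)) 0, x ∂μ < 0 := by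
    have hun : ⋃ n : ℕ, Ico (-(n:ℝ)) 0 = Iio 0 := by
      ext x
      simp only [mem_iUnion, mem_Ico, mem_Iio]
      constructor
      · rintro ⟨n, _, h2⟩; exact h2
      · intro hx
        obtain ⟨n, hn⟩ := exists_nat_ge (-x)
        exact ⟨n, by linarith, hx⟩
    have hmono : Monotone (fun n : ℕ => Ico (-(n:ℝ)) 0) := fun a b hab =>
      Ico_subset_Ico (neg_le_neg (by exact_mod_cast hab)) le_rfl
    have htend := tendsto_setIntegral_of_monotone (fun n : ℕ => measurableSet_Ico) hmono
      (by rw [hun]; exact hiOn _)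
    rw [hun] at htend
    exact (htend.eventually_lt_const hIio0int).exists
  obtain ⟨K, hJneg⟩ := hKex
  set S : Set ℝ := Ico (-(K:ℝ)) 0 with hSdef
  set J : ℝ := ∫ x in S, x ∂μ with hJdef
  have hμS : 0 < μ S := by
    rcases eq_or_lt_of_le (zero_le : 0 ≤ μ S) with h | h
    · exfalso
      have h0 : μ.restrict S = 0 := Measure.restrict_eq_zero.2 h.symm
      rw [hJdef] at hJneg
      rw [show (∫ x in S, x ∂μ) = 0 by rw [h0]; exact integral_zero_measure _] at hJneg
      linarith
    · exact h
  -- choose t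
  have httex : ∃ n : ℕ, 1 ≤ n ∧ J < ∫ x in Iic ((n:ℝ)), x ∂μ := by
    have hun : ⋃ n : ℕ, Iic ((n:ℝ)) = univ := by
      ext x
      simp only [mem_iUnion, mem_Iic, mem_univ, iff_true]
      exact exists_nat_ge x
    have hmono : Monotone (fun n : ℕ => Iic ((n:ℝ))) := fun a b hab =>
      Iic_subset_Iic.2 (by exact_mod_cast hab)
    have htend := tendsto_setIntegral_of_monotone (fun n : ℕ => measurableSet_Iic) hmono
      (by rw [hun]; exact hiOn _)
    rw [hun, Measure.restrict_univ, hcent] at htend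
    obtain ⟨n, h1, h2⟩ := ((htend.eventually_const_lt hJneg).and (eventually_ge_atTop 1)).exists
    exact ⟨n, h2, h1⟩
  obtain ⟨n, hn1, hJlt⟩ := httex
  set t : ℝ := (n : ℝ) with htdef
  have ht1 : (1:ℝ) ≤ t := by rw [htdef]; exact_mod_cast hn1
  set m : ℝ := ∫ x in Ioi t, x ∂μ with hmdef
  have hsplit : ∫ x in Iic t, x ∂μ + m = 0 := by
    have h := integral_add_compl (s := Iic t) measurableSet_Iic hint (f := fun x : ℝ => x)
    rw [compl_Iic, hcent] at h
    rw [hmdef]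
    linarith
  have hmpos : 0 < m :=
    pos_setInt μ measurableSet_Ioi (fun x hx => lt_of_lt_of_le one_pos (le_of_lt (lt_of_le_of_lt ht1 hx))) (hiOn _) (htail t)
  have hmJ : m < -J := by linarith
  set θ : ℝ := m / (-J) with hθdef
  have hθpos : 0 < θ := div_pos hmpos (by linarith)
  have hθlt1 : θ < 1 := (div_lt_one (by linarith)).2 hmJ
  have hJne : J ≠ 0 := ne_of_lt hJneg
  have hkey : θ * J = -m := by
    rw [hθdef, div_mul_eq_mul_div, div_eq_iff (show (-J) ≠ 0 by linarith)]
    ring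
  -- the measures
  set μU' : Measure ℝ := μ.restrict (Ioi t) + ENNReal.ofReal θ • μ.restrict S with hμU'def
  set μL' : Measure ℝ := μ.restrict (Iic t \ S) + ENNReal.ofReal (1-θ) • μ.restrict S with hμL'def
  have hSsubIic : S ⊆ Iic t := fun x hx => le_trans (le_of_lt hx.2) (by linarith)
  have hSmeas : MeasurableSet S := measurableSet_Ico
  have hsum : μU' + μL' = μ := by
    have h1 : ENNReal.ofReal θ • μ.restrict S + ENNReal.ofReal (1-θ) • μ.restrict S = μ.restrict S := by
      rw [← add_smul, ← ENNReal.ofReal_add hθpos.le (by linarith)]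
      norm_num
    have h2 : μ.restrict (Iic t \ S) + μ.restrict S = μ.restrict (Iic t) := by
      rw [← Measure.restrict_union disjoint_sdiff_left hSmeas, diff_union_of_subset hSsubIic]
    have h3 : μ.restrict (Iic t) + μ.restrict (Ioi t) = μ := by
      rw [← Measure.restrict_union (Iic_disjoint_Ioi le_rfl) measurableSet_Ioi,
        Iic_union_Ioi, Measure.restrict_univ]
    calc μU' + μL'
        = μ.restrict (Ioi t) + (μ.restrict (Iic t \ S) +
            (ENNReal.ofReal θ • μ.restrict S + ENNReal.ofReal (1-θ) • μ.restrict S)) := by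
          rw [hμU'def, hμL'def]; abel
      _ = μ := by rw [h1, h2, add_comm, h3]
  set RU : ENNReal := μU' univ with hRUdef
  set RL : ENNReal := μL' univ with hRLdef
  have hRUapp : RU = μ (Ioi t) + ENNReal.ofReal θ * μ S := by
    rw [hRUdef, hμU'def]
    simp [Measure.add_apply, Measure.smul_apply, Measure.restrict_apply_univ, smul_eq_mul]
  have hRLapp : RL = μ (Iic t \ S) + ENNReal.ofReal (1-θ) * μ S := by
    rw [hRLdef, hμL'def]
    simp [Measure.add_apply, Measure.smul_apply, Measure.restrict_apply_univ, smul_eq_mul]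
  have hRUne0 : RU ≠ 0 := by
    apply ne_of_gt
    rw [hRUapp]
    exact lt_of_lt_of_le (htail t) le_self_add
  have hRUnetop : RU ≠ ⊤ := by
    rw [hRUapp]
    exact ENNReal.add_ne_top.2 ⟨measure_ne_top μ _,
      ENNReal.mul_ne_top ENNReal.ofReal_ne_top (measure_ne_top μ _)⟩
  have hRLne0 : RL ≠ 0 := by
    apply ne_of_gt
    rw [hRLapp]
    refine lt_of_lt_of_le ?_ le_add_self
    exact ENNReal.mul_pos (ENNReal.ofReal_pos.2 (by linarith)).ne' hμS.ne'
  have hsum1 : RU + RL = 1 := by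
    have h := congrArg (fun ν : Measure ℝ => ν univ) hsum
    simpa [Measure.add_apply, measure_univ, hRUdef, hRLdef] using h
  have hRLnetop : RL ≠ ⊤ := by
    intro h
    rw [h] at hsum1
    simp at hsum1
  set r : ℝ := RU.toReal with hrdef
  have hofr : ENNReal.ofReal r = RU := ENNReal.ofReal_toReal hRUnetop
  have hrpos : 0 < r := ENNReal.toReal_pos hRUne0 hRUnetop
  have hr1 : r + RL.toReal = 1 := by
    rw [hrdef, ← ENNReal.toReal_add hRUnetop hRLnetop, hsum1, ENNReal.toReal_one]
  have hRLtoReal : RL.toReal = 1 - r := by linarith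
  have hofr' : ENNReal.ofReal (1 - r) = RL := by
    rw [← hRLtoReal]; exact ENNReal.ofReal_toReal hRLnetop
  have hrlt1 : r < 1 := by
    have := ENNReal.toReal_pos hRLne0 hRLnetop
    linarith
  have hKnonneg : -(K:ℝ) ≤ 0 := neg_nonpos.2 (Nat.cast_nonneg K)
  -- integrability facts
  have hiθ0 : ENNReal.ofReal θ ≠ 0 := (ENNReal.ofReal_pos.2 hθpos).ne'
  have hi1θ0 : ENNReal.ofReal (1-θ) ≠ 0 := (ENNReal.ofReal_pos.2 (by linarith)).ne'
  have hiU' : Integrable (fun x : ℝ => x) μU' := by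
    rw [hμU'def, integrable_add_measure]
    exact ⟨hint.restrict, (integrable_smul_measure hiθ0 ENNReal.ofReal_ne_top).2 hint.restrict⟩
  have hiL' : Integrable (fun x : ℝ => x) μL' := by
    rw [hμL'def, integrable_add_measure]
    exact ⟨hint.restrict, (integrable_smul_measure hi1θ0 ENNReal.ofReal_ne_top).2 hint.restrict⟩
  -- integrals
  have hintU' : ∫ x, x ∂μU' = 0 := by
    rw [hμU'def, integral_add_measure hint.restrict
      ((integrable_smul_measure hiθ0 ENNReal.ofReal_ne_top).2 hint.restrict),
      integral_smul_measure, ENNReal.toReal_ofReal hθpos.le]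
    rw [show (μ.restrict S) = μ.restrict S from rfl]
    have : ∫ x, x ∂(μ.restrict S) = J := rfl
    rw [this]
    have : ∫ x, x ∂(μ.restrict (Ioi t)) = m := rfl
    rw [this, smul_eq_mul]
    linarith
  have hintL' : ∫ x, x ∂μL' = 0 := by
    have hdiff : ∫ x in Iic t \ S, x ∂μ = -m - J := by
      have hu := setIntegral_union (f := fun x : ℝ => x) (disjoint_sdiff_left (s := S) (t := Iic t))
        hSmeas (hiOn _) (hiOn _)
      rw [diff_union_of_subset hSsubIic] at hu
      rw [← hJdef] at hu
      linarith
    rw [hμL'def, integral_add_measure hint.restrict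
      ((integrable_smul_measure hi1θ0 ENNReal.ofReal_ne_top).2 hint.restrict),
      integral_smul_measure, ENNReal.toReal_ofReal (by linarith : (0:ℝ) ≤ 1 - θ)]
    rw [show (μ.restrict S) = μ.restrict S from rfl]
    have h1 : ∫ x, x ∂(μ.restrict S) = J := rfl
    have h2 : ∫ x, x ∂(μ.restrict (Iic t \ S)) = -m - J := hdiff
    rw [h1, h2, smul_eq_mul]
    have hx : (1 - θ) * J = J - θ * J := by ring
    rw [hx, hkey]
    ring
  refine ⟨RU⁻¹ • μU', RL⁻¹ • μL', r, ?_, ?_, hrpos, hrlt1, ?_, ?_, ?_, ?_, ?_, ?_, ?_⟩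
  · exact ⟨by rw [Measure.smul_apply, ← hRUdef, smul_eq_mul, ENNReal.inv_mul_cancel hRUne0 hRUnetop]⟩
  · exact ⟨by rw [Measure.smul_apply, ← hRLdef, smul_eq_mul, ENNReal.inv_mul_cancel hRLne0 hRLnetop]⟩
  · refine ⟨-(K:ℝ), ?_⟩
    have h1 : Iio (-(K:ℝ)) ∩ Ioi t = ∅ := by
      rw [eq_empty_iff_forall_notMem]
      rintro x ⟨hx1, hx2⟩
      simp only [mem_Iio] at hx1
      simp only [mem_Ioi] at hx2
      linarith
    have h2 : Iio (-(K:ℝ)) ∩ S = ∅ := by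
      rw [eq_empty_iff_forall_notMem]
      rintro x ⟨hx1, hx2⟩
      simp only [mem_Iio] at hx1
      exact absurd hx2.1 (by linarith)
    rw [Measure.smul_apply, hμU'def, Measure.add_apply, Measure.smul_apply,
      Measure.restrict_apply measurableSet_Iio, Measure.restrict_apply measurableSet_Iio,
      h1, h2]
    simp
  · refine ⟨t, ?_⟩
    have h1 : Ioi t ∩ (Iic t \ S) = ∅ := by
      rw [eq_empty_iff_forall_notMem]
      rintro x ⟨hx1, hx2, _⟩
      simp only [mem_Ioi] at hx1
      simp only [mem_Iic] at hx2
      linarith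
    have h2 : Ioi t ∩ S = ∅ := by
      rw [eq_empty_iff_forall_notMem]
      rintro x ⟨hx1, hx2⟩
      simp only [mem_Ioi] at hx1
      have := hx2.2
      linarith
    rw [Measure.smul_apply, hμL'def, Measure.add_apply, Measure.smul_apply,
      Measure.restrict_apply measurableSet_Ioi, Measure.restrict_apply measurableSet_Ioi,
      h1, h2]
    simp
  · exact (integrable_smul_measure (ENNReal.inv_ne_zero.2 hRUnetop)
      (ENNReal.inv_ne_top.2 hRUne0)).2 hiU'
  · rw [integral_smul_measure, hintU', smul_zero]
  · exact (integrable_smul_measure (ENNReal.inv_ne_zero.2 hRLnetop)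
      (ENNReal.inv_ne_top.2 hRLne0)).2 hiL'
  · rw [integral_smul_measure, hintL', smul_zero]
  · rw [hofr, hofr', smul_smul, smul_smul, ENNReal.mul_inv_cancel hRUne0 hRUnetop,
      ENNReal.mul_inv_cancel hRLne0 hRLnetop, one_smul, one_smul, hsum]
end

section
/- Let Π be a Poisson random measure on a σ-finite measure space with intensity μ, and let f ∈ ⋂_{2≤q≤p} L^q(μ) for an integer p ≥ 2, with ∫f dμ-compensation well-defined. Define M_k = E[(∫f d(Π - μ))^k] for integers 0 ≤ k ≤ p. Suppose the moment recursion M_p = Σ_{0≤k≤p-2} C(p-1,k)·(∫ f^{p-k} dμ)·M_k holds, and suppose |∫f^j dμ| ≤ C·t^{j·a}·m^{1-j/α} for all 2 ≤ j ≤ p, constants C, t, m > 0, a ∈ ℝ, α ∈ (1,2). Then there exist constants c_k (depending only on k, C, α) such that |M_k| ≤ c_k·t^{k·a}·m^{-k/α + ⌊k/2⌋} for all 0 ≤ k ≤ p, provided m ≥ 1. -/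
open Filter

noncomputable def cseq (C : ℝ) : ℕ → ℝ
  | 0 => 1
  | 1 => 0
  | (n+2) => ∑ k ∈ (Finset.range (n+1)).attach,
      (Nat.choose (n+1) k.1 : ℝ) * C * cseq C k.1
  decreasing_by exact lt_of_lt_of_le (Finset.mem_range.mp k.2) (by omega)

lemma cseq_nonneg (C : ℝ) (hC : 0 ≤ C) : ∀ n, 0 ≤ cseq C n := by
  intro n
  induction n using Nat.strong_induction_on with
  | _ n ih =>
    match n with
    | 0 => simp [cseq]
    | 1 => simp [cseq]
    | (n+2) =>
      rw [cseq]
      apply Finset.sum_nonneg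
      intro k _
      have hk := Finset.mem_range.mp k.2
      exact mul_nonneg (mul_nonneg (by positivity) hC) (ih k.1 (by omega))

/-- moment bounds from Privault's recursion. There are constants `c_k`
depending only on `k`, `C` and `α` such that whenever `M_0 = 1`, `M_1 = 0`, the moments
satisfy the recursion `M_q = Σ_{0≤k≤q-2} C(q-1,k) A_{q-k} M_k` for `2 ≤ q ≤ p`, and
`|A_j| ≤ C t^{ja} m^{1-j/α}` for `2 ≤ j ≤ p`, one has
`|M_k| ≤ c_k t^{ka} m^{-k/α+⌊k/2⌋}` for all `0 ≤ k ≤ p` (provided `m ≥ 1`). -/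
theorem stmt17 (C α : ℝ) (hC : 0 < C) (hα1 : 1 < α) (hα2 : α < 2) :
    ∃ c : ℕ → ℝ, ∀ (p : ℕ), 2 ≤ p →
      ∀ (t m a : ℝ), 0 < t → 1 ≤ m →
      ∀ (M A : ℕ → ℝ), M 0 = 1 → M 1 = 0 →
      (∀ q : ℕ, 2 ≤ q → q ≤ p →
        M q = ∑ k ∈ Finset.range (q - 1), (Nat.choose (q - 1) k : ℝ) * A (q - k) * M k) →
      (∀ j : ℕ, 2 ≤ j → j ≤ p →
        |A j| ≤ C * t ^ ((j : ℝ) * a) * m ^ (1 - (j : ℝ) / α)) →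
      ∀ k : ℕ, k ≤ p →
        |M k| ≤ c k * t ^ ((k : ℝ) * a) * m ^ (-((k : ℝ) / α) + ((k / 2 : ℕ) : ℝ)) := by
  refine ⟨cseq C, ?_⟩
  intro p hp t m a ht hm M A hM0 hM1 hrec hA
  have hm0 : (0:ℝ) < m := lt_of_lt_of_le one_pos hm
  intro k
  induction k using Nat.strong_induction_on with
  | _ k ih =>
    match k with
    | 0 =>
      intro _
      simp [cseq, hM0]
    | 1 =>
      intro _
      simp [cseq, hM1]
    | (n+2) =>
      intro hk
      rw [hrec (n+2) (by omega) hk]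
      have hR : n + 2 - 1 = n + 1 := by omega
      rw [hR]
      calc |∑ j ∈ Finset.range (n+1), (Nat.choose (n+1) j : ℝ) * A (n+2-j) * M j|
          ≤ ∑ j ∈ Finset.range (n+1), |(Nat.choose (n+1) j : ℝ) * A (n+2-j) * M j| :=
            Finset.abs_sum_le_sum_abs _ _
        _ ≤ ∑ j ∈ Finset.range (n+1), (Nat.choose (n+1) j : ℝ) * C * cseq C j *
              (t ^ (((n+2:ℕ):ℝ) * a) * m ^ (-(((n+2:ℕ):ℝ) / α) + (((n+2) / 2 : ℕ) : ℝ))) := by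
            apply Finset.sum_le_sum
            intro j hj
            have hjn : j ≤ n := by have := Finset.mem_range.mp hj; omega
            have h2 : 2 ≤ n+2-j := by omega
            have hpj : n+2-j ≤ p := by omega
            have hAj := hA (n+2-j) h2 hpj
            have hMj := ih j (by omega) (by omega)
            have hcj : 0 ≤ cseq C j := cseq_nonneg C hC.le j
            have hcast : ((n+2-j:ℕ):ℝ) = ((n+2:ℕ):ℝ) - (j:ℝ) := by
              rw [Nat.cast_sub (show j ≤ n+2 by omega)]
            rw [abs_mul, abs_mul, Nat.abs_cast]
            have step1 : ((Nat.choose (n+1) j : ℝ)) * |A (n+2-j)| * |M j| ≤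
                ((Nat.choose (n+1) j : ℝ)) * (C * t ^ (((n+2-j:ℕ):ℝ)*a) * m ^ (1 - ((n+2-j:ℕ):ℝ)/α)) *
                (cseq C j * t ^ ((j:ℝ)*a) * m ^ (-((j:ℝ)/α) + ((j/2:ℕ):ℝ))) := by
              apply mul_le_mul
              · exact mul_le_mul_of_nonneg_left hAj (by positivity)
              · exact hMj
              · exact abs_nonneg _
              · positivity
            refine step1.trans ?_
            rw [hcast]
            have e1 : t ^ ((((n+2:ℕ):ℝ) - (j:ℝ))*a) * t ^ ((j:ℝ)*a) = t ^ (((n+2:ℕ):ℝ)*a) := by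
              rw [← Real.rpow_add ht]; congr 1; ring
            have e2 : m ^ (1 - (((n+2:ℕ):ℝ)-(j:ℝ))/α) * m ^ (-((j:ℝ)/α) + ((j/2:ℕ):ℝ))
                = m ^ (1 - ((n+2:ℕ):ℝ)/α + ((j/2:ℕ):ℝ)) := by
              rw [← Real.rpow_add hm0]; congr 1; ring
            have hexp : 1 - ((n+2:ℕ):ℝ)/α + ((j/2:ℕ):ℝ)
                ≤ -(((n+2:ℕ):ℝ)/α) + (((n+2)/2:ℕ):ℝ) := by
              have hnat : j/2 + 1 ≤ (n+2)/2 := by omega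
              have hc : ((j/2:ℕ):ℝ) + 1 ≤ (((n+2)/2:ℕ):ℝ) := by exact_mod_cast hnat
              linarith
            calc ((Nat.choose (n+1) j : ℝ)) * (C * t ^ ((((n+2:ℕ):ℝ)-(j:ℝ))*a) * m ^ (1 - (((n+2:ℕ):ℝ)-(j:ℝ))/α)) *
                  (cseq C j * t ^ ((j:ℝ)*a) * m ^ (-((j:ℝ)/α) + ((j/2:ℕ):ℝ)))
                = ((Nat.choose (n+1) j : ℝ) * C * cseq C j) *
                  ((t ^ ((((n+2:ℕ):ℝ)-(j:ℝ))*a) * t ^ ((j:ℝ)*a)) *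
                   (m ^ (1 - (((n+2:ℕ):ℝ)-(j:ℝ))/α) * m ^ (-((j:ℝ)/α) + ((j/2:ℕ):ℝ)))) := by ring
              _ = ((Nat.choose (n+1) j : ℝ) * C * cseq C j) *
                  (t ^ (((n+2:ℕ):ℝ)*a) * m ^ (1 - ((n+2:ℕ):ℝ)/α + ((j/2:ℕ):ℝ))) := by rw [e1, e2]
              _ ≤ ((Nat.choose (n+1) j : ℝ) * C * cseq C j) *
                  (t ^ (((n+2:ℕ):ℝ)*a) * m ^ (-(((n+2:ℕ):ℝ)/α) + (((n+2)/2:ℕ):ℝ))) := by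
                  apply mul_le_mul_of_nonneg_left _ (by positivity)
                  exact mul_le_mul_of_nonneg_left
                    (Real.rpow_le_rpow_of_exponent_le hm hexp)
                    (le_of_lt (Real.rpow_pos_of_pos ht _))
        _ = cseq C (n+2) * t ^ (((n+2:ℕ):ℝ) * a) * m ^ (-(((n+2:ℕ):ℝ) / α) + (((n+2) / 2 : ℕ) : ℝ)) := by
            rw [← Finset.sum_mul]
            rw [show cseq C (n+2) = ∑ j ∈ (Finset.range (n+1)).attach,
                  (Nat.choose (n+1) j.1 : ℝ) * C * cseq C j.1 from by rw [cseq]]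
            rw [Finset.sum_attach (Finset.range (n+1)) (fun j => (Nat.choose (n+1) j : ℝ) * C * cseq C j)]
            ring
end
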